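/- arXiv:0804.0475 — 3 statements merged into one kernel-verified Lean document; each statement's English description precedes it below -/
import Mathlib

section
/- Let I = (u_1,...,u_{m+1}) be the monomial ideal in K[x_1,...,x_{m+1}] with u_i = x_1···x_{i-1}·x_{i+1}···x_{m+1} for i = 1,...,m+1 (the product of all variables except x_i). Then T(I) is the set of ALL trees on the vertex set [m+1]: every tree on [m+1] is a relation tree of I. -/
open MvPolynomial

namespace CMCodim2

noncomputable section

/-- The total degree of an exponent vector (of a monomial). -/
def mdeg {σ : Type*} (a : σ →₀ ℕ) : ℕ := a.sum fun _ e => e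

/-- The height (codimension) of an ideal: the infimum of the heights of the
prime ideals containing it. -/
def idealHeight {R : Type*} [CommRing R] (I : Ideal R) : ℕ∞ :=
  ⨅ (p : PrimeSpectrum R) (_ : I ≤ p.asIdeal), Order.height p

/-- An ideal `I` of a polynomial ring is a Cohen–Macaulay ideal of codimension `2`
iff it has height `2` and `R/I` has a free resolution
`0 → R^a → R^b → R → R/I → 0` of length `2` (Auslander–Buchsbaum). -/
def IsCMCodim2 {R : Type*} [CommRing R] (I : Ideal R) : Prop :=
  idealHeight I = 2 ∧
    ∃ (a b : ℕ) (f : (Fin a → R) →ₗ[R] (Fin b → R)) (g : (Fin b → R) →ₗ[R] R),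
      Function.Injective f ∧ LinearMap.range f = LinearMap.ker g ∧
        LinearMap.range g = I

/-- The map `φ₁ : S^{m+1} → S`, `e_i ↦ u_i`, where `u_i` is the (monic) monomial
with exponent vector `d i`. -/
def phi (K : Type*) [Field K] {σ : Type*} (m : ℕ) (d : Fin (m + 1) → (σ →₀ ℕ)) :
    (Fin (m + 1) → MvPolynomial σ K) →ₗ[MvPolynomial σ K] MvPolynomial σ K where
  toFun v := ∑ i, v i * monomial (d i) 1
  map_add' x y := by simp [add_mul, Finset.sum_add_distrib]
  map_smul' c x := by simp [Finset.mul_sum, mul_assoc]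

/-- The Taylor relation `r_{ij} = u_{ji} e_j - u_{ij} e_i ∈ S^{m+1}` of the monomials
`u_i, u_j` with exponent vectors `d i, d j`; here `u_{ji} = u_i / gcd(u_i,u_j)`
has exponent vector `d i - d j` (truncated subtraction). -/
def taylorRel (K : Type*) [Field K] {σ : Type*} (m : ℕ) (d : Fin (m + 1) → (σ →₀ ℕ))
    (i j : Fin (m + 1)) : Fin (m + 1) → MvPolynomial σ K := fun k =>
  if k = j then monomial (d i - d j) 1
  else if k = i then -(monomial (d j - d i) 1) else 0

/-- `t` lists the `m` (unordered) pairs of indices of Taylor relations forming the rows of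
a Hilbert–Burch matrix of the ideal generated by the `m+1` monomials with exponent
vectors `d i`: the corresponding Taylor relations generate (hence, being `m` elements
generating the free rank-`m` module, minimally generate) the first syzygy module
`U = ker φ₁`. -/
def IsHB (K : Type*) [Field K] {σ : Type*} (m : ℕ) (d : Fin (m + 1) → (σ →₀ ℕ))
    (t : Fin m → Fin (m + 1) × Fin (m + 1)) : Prop :=
  (∀ k, (t k).1 ≠ (t k).2) ∧
    Submodule.span (MvPolynomial σ K)
        (Set.range fun k => taylorRel K m d (t k).1 (t k).2) =
      LinearMap.ker (phi K m d)

/-- The graph on `[m+1]` whose edges `{i,j}` are the pairs of columns in which the rows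
of a Hilbert–Burch matrix (given by the list `t` of pairs) have their nonzero entries. -/
def relGraph {m : ℕ} (t : Fin m → Fin (m + 1) × Fin (m + 1)) :
    SimpleGraph (Fin (m + 1)) :=
  SimpleGraph.fromRel fun i j => ∃ k, t k = (i, j)

/-- `T(I)`: the set of relation trees (graphs of Hilbert–Burch matrices) of the ideal
generated by the `m+1` monomials with exponent vectors `d i`. -/
def relTrees (K : Type*) [Field K] {σ : Type*} (m : ℕ) (d : Fin (m + 1) → (σ →₀ ℕ)) :
    Set (SimpleGraph (Fin (m + 1))) :=
  {Γ | ∃ t, IsHB K m d t ∧ relGraph t = Γ}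

/-- The Taylor graph `G(I)`: the union of all relation trees of `I`. -/
def taylorGraph (K : Type*) [Field K] {σ : Type*} (m : ℕ)
    (d : Fin (m + 1) → (σ →₀ ℕ)) : SimpleGraph (Fin (m + 1)) :=
  sSup (relTrees K m d)

/-- `I` is (the monomial ideal) minimally generated by the `m+1` monic monomials with
exponent vectors `d i`. -/
def MinGens (K : Type*) [Field K] {σ : Type*} (m : ℕ) (d : Fin (m + 1) → (σ →₀ ℕ))
    (I : Ideal (MvPolynomial σ K)) : Prop :=
  I = Ideal.span (Set.range fun i => (monomial (d i) 1 : MvPolynomial σ K)) ∧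
    ∀ j : Fin (m + 1), (monomial (d j) 1 : MvPolynomial σ K) ∉
      Ideal.span ((fun i => (monomial (d i) 1 : MvPolynomial σ K)) '' {i | i ≠ j})

/-- The ideal generated by the `m+1` monomials with exponent vectors `d i` has a linear
resolution: all generators have the same degree and all the entries of every
Hilbert–Burch matrix of `I` are linear forms (i.e. every Taylor relation occurring as a
row of a Hilbert–Burch matrix is linear). -/
def HasLinearRes (K : Type*) [Field K] {σ : Type*} (m : ℕ)
    (d : Fin (m + 1) → (σ →₀ ℕ)) : Prop :=
  (∃ c, ∀ i, mdeg (d i) = c) ∧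
    ∀ t, IsHB K m d t →
      ∀ k, mdeg (d (t k).1 - d (t k).2) = 1 ∧ mdeg (d (t k).2 - d (t k).1) = 1

/-- A graph is chordal if every cycle of length at least `4` has a chord, i.e. an edge
of the graph joining two vertices of the cycle which is not an edge of the cycle. -/
def IsChordal {V : Type*} (G : SimpleGraph V) : Prop :=
  ∀ ⦃v : V⦄ (w : G.Walk v v), w.IsCycle → 4 ≤ w.length →
    ∃ a b, a ∈ w.support ∧ b ∈ w.support ∧ G.Adj a b ∧ s(a, b) ∉ w.edges

/-- A maximal clique of a graph. -/
def IsMaxClique {V : Type*} (G : SimpleGraph V) (s : Set V) : Prop :=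
  G.IsClique s ∧ ∀ t : Set V, G.IsClique t → s ⊆ t → t = s

/-- `b` is the "path-begin" function of the tree `G`: for `i ≠ j`, `b i j` is the
first vertex after `i` on the unique path in `G` from `i` to `j` (equivalently, the
neighbour of `i` which is one step closer to `j`). -/
def PathBegin {V : Type*} (G : SimpleGraph V) (b : V → V → V) : Prop :=
  ∀ i j : V, i ≠ j → G.Adj i (b i j) ∧ G.dist (b i j) j + 1 = G.dist i j

/-- The index set of the `2m` indeterminates `x_{ij}`: ordered pairs `(i,j)` such that
`{i,j}` is an edge of `G`. -/
abbrev EdgeVar {N : ℕ} (G : SimpleGraph (Fin N)) : Type :=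
  {p : Fin N × Fin N // G.Adj p.1 p.2}

/-- `ε` enumerates the edges of `G` (each unordered edge appearing exactly once). -/
def EdgeEnum {m : ℕ} (G : SimpleGraph (Fin (m + 1)))
    (ε : Fin m → Fin (m + 1) × Fin (m + 1)) : Prop :=
  ∀ i j : Fin (m + 1), G.Adj i j → ∃! k, ε k = (i, j) ∨ ε k = (j, i)

/-- The generic matrix `A(Γ)` attached to the tree `G` with edges enumerated by `ε`:
the `k`-th row, for the `k`-th edge `{i,j}`, has entry `-x_{ij}` in column `i`,
entry `x_{ji}` in column `j` and `0` elsewhere. -/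
def genMat (K : Type*) [Field K] {m : ℕ} (G : SimpleGraph (Fin (m + 1)))
    (ε : Fin m → Fin (m + 1) × Fin (m + 1)) (hε : ∀ k, G.Adj (ε k).1 (ε k).2) :
    Matrix (Fin m) (Fin (m + 1)) (MvPolynomial (EdgeVar G) K) := fun k l =>
  if l = (ε k).1 then -(X ⟨ε k, hε k⟩)
  else if l = (ε k).2 then X ⟨((ε k).2, (ε k).1), (hε k).symm⟩
  else 0

/-- `v_j`: the maximal minor of the generic matrix `A(Γ)` obtained by omitting the
`j`-th column. -/
def genMinor (K : Type*) [Field K] {m : ℕ} (G : SimpleGraph (Fin (m + 1)))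
    (ε : Fin m → Fin (m + 1) × Fin (m + 1)) (hε : ∀ k, G.Adj (ε k).1 (ε k).2)
    (j : Fin (m + 1)) : MvPolynomial (EdgeVar G) K :=
  ((genMat K G ε hε).submatrix id j.succAbove).det

/-- The monomial `∏_{i ≠ j} x_{i, b(i,j)}`. -/
def genV (K : Type*) [Field K] {m : ℕ} (G : SimpleGraph (Fin (m + 1)))
    (b : Fin (m + 1) → Fin (m + 1) → Fin (m + 1))
    (hb : ∀ i j : Fin (m + 1), i ≠ j → G.Adj i (b i j)) (j : Fin (m + 1)) :
    MvPolynomial (EdgeVar G) K :=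
  ∏ i, if h : i = j then 1 else X ⟨(i, b i j), hb i j h⟩

/-- The exponent vector of the monomial `∏_{i ≠ j} x_{i, b(i,j)}`. -/
def genD {m : ℕ} (G : SimpleGraph (Fin (m + 1)))
    (b : Fin (m + 1) → Fin (m + 1) → Fin (m + 1))
    (hb : ∀ i j : Fin (m + 1), i ≠ j → G.Adj i (b i j)) (j : Fin (m + 1)) :
    EdgeVar G →₀ ℕ :=
  ∑ i, if h : i = j then 0 else Finsupp.single ⟨(i, b i j), hb i j h⟩ 1

end

end CMCodim2

open CMCodim2 MvPolynomial
namespace Statement10Aux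

open Finset

variable (K : Type*) [Field K] {m : ℕ}

noncomputable def dd (m : ℕ) : Fin (m + 1) → (Fin (m + 1) →₀ ℕ) :=
  fun i => ∑ k ∈ Finset.univ.erase i, Finsupp.single k 1

lemma dd_apply (i l : Fin (m + 1)) : dd m i l = if l = i then 0 else 1 := by
  classical
  rw [dd, Finsupp.finset_sum_apply]
  rw [Finset.sum_congr rfl (fun k _ => Finsupp.single_apply)]
  rw [Finset.sum_ite_eq' (Finset.univ.erase i) l (fun _ => 1)]
  by_cases h : l = i <;> simp [h]

lemma dd_sub {i j : Fin (m + 1)} (h : i ≠ j) :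
    dd m i - dd m j = Finsupp.single j 1 := by
  ext l
  rw [Finsupp.tsub_apply, dd_apply, dd_apply, Finsupp.single_apply]
  by_cases h1 : l = i
  · subst h1
    simp [h, Ne.symm h]
  · by_cases h2 : l = j
    · subst h2
      simp [h1]
    · simp [h1, h2, Ne.symm h2]

lemma dd_add_single (i : Fin (m + 1)) :
    dd m i + Finsupp.single i 1 = ∑ k : Fin (m + 1), Finsupp.single k 1 :=
  Finset.sum_erase_add _ _ (Finset.mem_univ i)

noncomputable def gvec (i : Fin (m + 1)) : Fin (m + 1) → MvPolynomial (Fin (m + 1)) K :=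
  Pi.single i (X i)

lemma taylor_eq {i j : Fin (m + 1)} (h : i ≠ j) :
    taylorRel K m (dd m) i j = gvec K j - gvec K i := by
  funext k
  simp only [taylorRel, gvec, Pi.sub_apply, Pi.single_apply]
  by_cases h1 : k = j
  · have h2 : k ≠ i := by rw [h1]; exact Ne.symm h
    rw [if_pos h1, if_pos h1, if_neg h2, dd_sub h, sub_zero]
    rfl
  · by_cases h2 : k = i
    · rw [if_neg h1, if_pos h2, if_pos h2, if_neg h1, dd_sub h.symm, zero_sub]
      rfl
    · rw [if_neg h1, if_neg h2, if_neg h1, if_neg h2, sub_zero]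

lemma phi_apply (d : Fin (m + 1) → (Fin (m + 1) →₀ ℕ))
    (v : Fin (m + 1) → MvPolynomial (Fin (m + 1)) K) :
    phi K m d v = ∑ i, v i * monomial (d i) 1 := rfl

lemma phi_gvec (i : Fin (m + 1)) :
    phi K m (dd m) (gvec K i) = monomial (∑ k : Fin (m + 1), Finsupp.single k 1) 1 := by
  rw [phi_apply, Finset.sum_eq_single i]
  · rw [gvec, Pi.single_eq_same,
      show (X i : MvPolynomial (Fin (m + 1)) K) = monomial (Finsupp.single i 1) 1 from rfl,
      monomial_mul, one_mul, add_comm (Finsupp.single i 1) (dd m i), dd_add_single]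
  · intro b _ hb
    rw [gvec, Pi.single_eq_of_ne hb, zero_mul]
  · intro h; exact absurd (Finset.mem_univ i) h

lemma taylor_mem_ker {i j : Fin (m + 1)} (h : i ≠ j) :
    taylorRel K m (dd m) i j ∈ LinearMap.ker (phi K m (dd m)) := by
  rw [LinearMap.mem_ker, taylor_eq K h, map_sub, phi_gvec, phi_gvec, sub_self]

lemma aeval_update_monomial_ne (i : Fin (m + 1)) (a : Fin (m + 1) →₀ ℕ) (c : K)
    (ha : a i = 0) :
    aeval (Function.update X i (0 : MvPolynomial (Fin (m + 1)) K)) (monomial a c)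
      = monomial a c := by
  rw [aeval_monomial, MvPolynomial.algebraMap_eq, monomial_eq]
  congr 1
  refine Finsupp.prod_congr (fun n hn => ?_)
  have hni : n ≠ i := fun hni => (Finsupp.mem_support_iff.1 hn) (hni ▸ ha)
  rw [Function.update_of_ne hni]

lemma aeval_update_monomial_zero (i : Fin (m + 1)) (a : Fin (m + 1) →₀ ℕ) (c : K)
    (ha : a i ≠ 0) :
    aeval (Function.update X i (0 : MvPolynomial (Fin (m + 1)) K)) (monomial a c) = 0 := by
  rw [aeval_monomial]
  have hi : i ∈ a.support := Finsupp.mem_support_iff.2 ha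
  rw [Finsupp.prod, Finset.prod_eq_zero hi
    (by rw [Function.update_self]; exact zero_pow ha), mul_zero]

lemma aeval_update_fix (i : Fin (m + 1)) (p : MvPolynomial (Fin (m + 1)) K)
    (hp : ∀ a ∈ p.support, a i = 0) :
    aeval (Function.update X i (0 : MvPolynomial (Fin (m + 1)) K)) p = p := by
  calc aeval (Function.update X i (0 : MvPolynomial (Fin (m + 1)) K)) p
      = aeval (Function.update X i (0 : MvPolynomial (Fin (m + 1)) K))
          (∑ a ∈ p.support, monomial a (coeff a p)) := by
        rw [support_sum_monomial_coeff]
    _ = ∑ a ∈ p.support, monomial a (coeff a p) := by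
        rw [map_sum]
        exact Finset.sum_congr rfl fun a ha => aeval_update_monomial_ne K i a _ (hp a ha)
    _ = p := support_sum_monomial_coeff p

lemma mod_support (i : Fin (m + 1)) (p : MvPolynomial (Fin (m + 1)) K) :
    ∀ a ∈ (p.modMonomial (Finsupp.single i 1)).support, a i = 0 := by
  intro a ha
  by_contra hne
  have hle : Finsupp.single i 1 ≤ a := Finsupp.single_le_iff.2 (Nat.one_le_iff_ne_zero.2 hne)
  exact (Finsupp.mem_support_iff.1 ha) (coeff_modMonomial_of_le p hle)

lemma ker_le_star :
    LinearMap.ker (phi K m (dd m)) ≤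
      Submodule.span (MvPolynomial (Fin (m + 1)) K)
        (Set.range fun i : Fin (m + 1) => gvec K i - gvec K 0) := by
  classical
  intro v hv
  rw [LinearMap.mem_ker, phi_apply] at hv
  set w : Fin (m + 1) → MvPolynomial (Fin (m + 1)) K :=
    ∑ i ∈ Finset.univ.erase 0, ((v i).divMonomial (Finsupp.single i 1)) • (gvec K i - gvec K 0)
      with hwdef
  have hw_mem : w ∈ Submodule.span (MvPolynomial (Fin (m + 1)) K)
      (Set.range fun i : Fin (m + 1) => gvec K i - gvec K 0) :=
    Submodule.sum_mem _ fun i _ =>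
      Submodule.smul_mem _ _ (Submodule.subset_span ⟨i, rfl⟩)
  suffices hveq : v = w by rw [hveq]; exact hw_mem
  have hwj : ∀ j : Fin (m + 1), j ≠ 0 →
      w j = monomial (Finsupp.single j 1) 1 * ((v j).divMonomial (Finsupp.single j 1)) := by
    intro j hj
    rw [hwdef, Finset.sum_apply]
    rw [Finset.sum_eq_single j]
    · simp [gvec, Pi.single_eq_same, Pi.single_eq_of_ne hj, smul_eq_mul, MvPolynomial.X,
        mul_comm]
    · intro b _ hbj
      simp [gvec, Pi.single_eq_of_ne (Ne.symm hbj), Pi.single_eq_of_ne hj]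
    · intro hj'
      exact absurd (Finset.mem_erase.2 ⟨hj, Finset.mem_univ j⟩) hj'
  have hphiw : ∑ k, w k * monomial (dd m k) 1 = 0 := by
    have hw0 : phi K m (dd m) w = 0 := by
      rw [hwdef, map_sum]
      refine Finset.sum_eq_zero fun i _ => ?_
      rw [map_smul, map_sub, phi_gvec, phi_gvec, sub_self, smul_zero]
    rw [← phi_apply]; exact hw0
  have hker' : ∑ k, (v - w) k * monomial (dd m k) 1 = 0 := by
    calc ∑ k, (v - w) k * monomial (dd m k) 1
        = ∑ k, (v k * monomial (dd m k) 1 - w k * monomial (dd m k) 1) := by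
          refine Finset.sum_congr rfl fun k _ => ?_
          rw [Pi.sub_apply, sub_mul]
      _ = 0 := by rw [Finset.sum_sub_distrib, hv, hphiw, sub_zero]
  have hv'j : ∀ j : Fin (m + 1), j ≠ 0 →
      (v - w) j = (v j).modMonomial (Finsupp.single j 1) := by
    intro j hj
    rw [Pi.sub_apply, hwj j hj, sub_eq_iff_eq_add]
    exact (MvPolynomial.modMonomial_add_divMonomial (v j) (Finsupp.single j 1)).symm
  have hv'j0 : ∀ j : Fin (m + 1), j ≠ 0 → (v - w) j = 0 := by
    intro j hj
    have h0 := congrArg (aeval (Function.update X j (0 : MvPolynomial (Fin (m + 1)) K))) hker'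
    rw [map_sum, map_zero] at h0
    rw [Finset.sum_eq_single j] at h0
    · rw [map_mul, aeval_update_fix K j _ (by rw [hv'j j hj]; exact mod_support K j (v j)),
        aeval_update_monomial_ne K j (dd m j) 1 (by rw [dd_apply]; simp)] at h0
      rcases mul_eq_zero.1 h0 with h | h
      · exact h
      · exact absurd h (by simp [monomial_eq_zero])
    · intro k _ hk
      rw [map_mul, aeval_update_monomial_zero K j (dd m k) 1
        (by rw [dd_apply]; simp [Ne.symm hk]), mul_zero]
    · intro h; exact absurd (Finset.mem_univ j) h
  have hv'0 : (v - w) 0 = 0 := by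
    rw [Finset.sum_eq_single 0] at hker'
    · rcases mul_eq_zero.1 hker' with h | h
      · exact h
      · exact absurd h (by simp [monomial_eq_zero])
    · intro k _ hk
      rw [hv'j0 k hk, zero_mul]
    · intro h; exact absurd (Finset.mem_univ _) h
  have hvw : v - w = 0 := by
    funext j
    by_cases hj : j = 0
    · rw [hj, Pi.zero_apply]; exact hv'0
    · rw [Pi.zero_apply]; exact hv'j0 j hj
  exact sub_eq_zero.1 hvw

end Statement10Aux

namespace Statement10Aux





lemma card_le_of_connected {V : Type*} [Fintype V] [DecidableEq V] {G : SimpleGraph V}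
    [Fintype G.edgeSet] (hG : G.Connected) :
    Fintype.card V ≤ G.edgeFinset.card + 1 := by
  classical
  obtain ⟨r⟩ := hG.nonempty
  have key : ∀ v : V, v ≠ r → ∃ w : V, G.Adj v w ∧ G.dist w r < G.dist v r := by
    intro v hv
    have hd : G.dist v r ≠ 0 := by
      rw [Ne, SimpleGraph.dist_eq_zero_iff_eq_or_not_reachable]
      push_neg
      exact ⟨hv, hG.preconnected v r⟩
    obtain ⟨p, hp⟩ := SimpleGraph.exists_walk_of_dist_ne_zero hd
    cases p with
    | nil => exact absurd rfl hv
    | @cons _ c _ h q =>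
      refine ⟨c, h, ?_⟩
      have h1 := SimpleGraph.dist_le q
      simp only [SimpleGraph.Walk.length_cons] at hp
      omega
  choose N hN1 hN2 using key
  have hmaps : ∀ v ∈ Finset.univ.erase r,
      (if h : v = r then s(r, r) else s(v, N v h)) ∈ G.edgeFinset := by
    intro v hv
    have hv' : v ≠ r := (Finset.mem_erase.1 hv).1
    rw [dif_neg hv', SimpleGraph.mem_edgeFinset, SimpleGraph.mem_edgeSet]
    exact hN1 v hv'
  have hinj : Set.InjOn (fun v => if h : v = r then s(r, r) else s(v, N v h))
      (Finset.univ.erase r : Finset V) := by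
    intro a ha b hb hab
    rw [Finset.mem_coe, Finset.mem_erase] at ha hb
    simp only [dif_neg ha.1, dif_neg hb.1] at hab
    rw [Sym2.eq_iff] at hab
    rcases hab with ⟨h1, _⟩ | ⟨h1, h2⟩
    · exact h1
    · have w1 := hN2 a ha.1
      have w2 := hN2 b hb.1
      rw [h2] at w1
      rw [← h1] at w2
      omega
  have hcard := Finset.card_le_card_of_injOn _ hmaps hinj
  have hce : (Finset.univ.erase r).card = Fintype.card V - 1 := by
    rw [Finset.card_erase_of_mem (Finset.mem_univ r), Finset.card_univ]
  have hV : 1 ≤ Fintype.card V := @Fintype.card_pos _ _ ⟨r⟩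
  omega

lemma isTree_of_connected_of_card {V : Type*} [Fintype V] [DecidableEq V] {G : SimpleGraph V}
    [Fintype G.edgeSet] (hG : G.Connected) (hcard : G.edgeFinset.card + 1 ≤ Fintype.card V) :
    G.IsTree := by
  classical
  refine ⟨hG, ?_⟩
  intro u c hc
  have hlen : c.edges.length = c.length := c.length_edges
  have h3 := hc.three_le_length
  have hne : c.edges ≠ [] := by
    intro h
    rw [h] at hlen
    simp at hlen
    omega
  obtain ⟨e, he⟩ : ∃ e, e ∈ c.edges := ⟨_, List.head_mem hne⟩
  revert he
  induction e using Sym2.ind with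
  | _ v w =>
  intro he
  have hvw : G.Adj v w := c.adj_of_mem_edges he
  have hdel : (G \ SimpleGraph.fromEdgeSet {s(v, w)}).Reachable v w :=
    ((SimpleGraph.adj_and_reachable_delete_edges_iff_exists_cycle).2 ⟨u, c, hc, he⟩).2
  set G' := G \ SimpleGraph.fromEdgeSet {s(v, w)} with hG'
  have hle : G' ≤ G := sdiff_le
  have hpre : ∀ {a b : V}, G.Walk a b → G'.Reachable a b := by
    intro a b p
    induction p with
    | nil => exact SimpleGraph.Reachable.refl _
    | @cons x y z h q ih =>
      refine SimpleGraph.Reachable.trans ?_ ih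
      by_cases hxy : s(x, y) = s(v, w)
      · rw [Sym2.eq_iff] at hxy
        rcases hxy with ⟨rfl, rfl⟩ | ⟨rfl, rfl⟩
        · exact hdel
        · exact hdel.symm
      · refine SimpleGraph.Adj.reachable ?_
        rw [hG', SimpleGraph.sdiff_adj]
        refine ⟨h, fun hc' => ?_⟩
        rw [SimpleGraph.fromEdgeSet_adj] at hc'
        exact hxy (by simpa using hc'.1)
  have hG'conn : G'.Connected := by
    rw [SimpleGraph.connected_iff]
    exact ⟨fun a b => hpre ((hG.preconnected a b).some), ⟨v⟩⟩
  haveI : Fintype G'.edgeSet := Fintype.ofFinite _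
  have h1 : Fintype.card V ≤ G'.edgeFinset.card + 1 := card_le_of_connected hG'conn
  have hsub : G'.edgeFinset ⊆ G.edgeFinset.erase s(v, w) := by
    intro e' he'
    rw [SimpleGraph.mem_edgeFinset] at he'
    rw [Finset.mem_erase, SimpleGraph.mem_edgeFinset]
    refine ⟨?_, SimpleGraph.edgeSet_mono hle he'⟩
    rintro rfl
    rw [SimpleGraph.mem_edgeSet, hG', SimpleGraph.sdiff_adj] at he'
    exact he'.2 (by simp [SimpleGraph.fromEdgeSet_adj, hvw.ne])
  have h2 := Finset.card_le_card hsub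
  have h3' : s(v, w) ∈ G.edgeFinset := SimpleGraph.mem_edgeFinset.2 hvw
  have h4 := Finset.card_erase_of_mem h3'
  have h5 : 1 ≤ G.edgeFinset.card := Finset.card_pos.2 ⟨_, h3'⟩
  omega



open Finset

section MainParts

variable (K : Type*) [Field K] {m : ℕ}

theorem relGraph_isTree {t : Fin m → Fin (m + 1) × Fin (m + 1)}
    (hne : ∀ k, (t k).1 ≠ (t k).2)
    (hspan : Submodule.span (MvPolynomial (Fin (m + 1)) K)
        (Set.range fun k => taylorRel K m (dd m) (t k).1 (t k).2) =
      LinearMap.ker (phi K m (dd m))) :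
    (relGraph t).IsTree := by
  classical
  have hconn : (relGraph t).Connected := by
    rw [SimpleGraph.connected_iff]
    refine ⟨fun i j => ?_, ⟨0⟩⟩
    by_contra hij
    have hij' : i ≠ j := fun hh => hij (hh ▸ SimpleGraph.Reachable.refl i)
    -- the linear functional
    let ev1 : MvPolynomial (Fin (m + 1)) K →ₗ[K] K :=
      (aeval (fun _ : Fin (m + 1) => (1 : K))).toLinearMap
    let F : (Fin (m + 1) → MvPolynomial (Fin (m + 1)) K) →ₗ[K] K :=
      ∑ k ∈ Finset.univ.filter (fun k => (relGraph t).Reachable i k),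
        ev1.comp (LinearMap.proj k)
    have hFg : ∀ c, F (gvec K c) = if (relGraph t).Reachable i c then 1 else 0 := by
      intro c
      simp only [F, LinearMap.sum_apply, LinearMap.comp_apply, LinearMap.proj_apply]
      have hterm : ∀ k, ev1 (gvec K c k) = if k = c then 1 else 0 := by
        intro k
        rw [gvec, Pi.single_apply]
        by_cases hkc : k = c
        · rw [if_pos hkc, if_pos hkc]
          simp [ev1]
        · rw [if_neg hkc, if_neg hkc, map_zero]
      rw [Finset.sum_congr rfl fun k _ => hterm k,
        Finset.sum_ite_eq' (Finset.univ.filter (fun k => (relGraph t).Reachable i k)) c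
          (fun _ => 1)]
      simp
    have hFsmul : ∀ (c : MvPolynomial (Fin (m + 1)) K) x,
        F (c • x) = (aeval (fun _ : Fin (m + 1) => (1 : K))) c * F x := by
      intro c x
      simp only [F, LinearMap.sum_apply, LinearMap.comp_apply, LinearMap.proj_apply,
        Pi.smul_apply, smul_eq_mul, ev1, AlgHom.toLinearMap_apply, map_mul, Finset.mul_sum]
    have hF0 : ∀ x ∈ Submodule.span (MvPolynomial (Fin (m + 1)) K)
        (Set.range fun k => taylorRel K m (dd m) (t k).1 (t k).2), F x = 0 := by
      intro x hx
      induction hx using Submodule.span_induction with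
      | mem x hx =>
        obtain ⟨k, rfl⟩ := hx
        show F (taylorRel K m (dd m) (t k).1 (t k).2) = 0
        have hadj : (relGraph t).Adj (t k).1 (t k).2 := by
          rw [relGraph, SimpleGraph.fromRel_adj]
          exact ⟨hne k, Or.inl ⟨k, rfl⟩⟩
        rw [taylor_eq K (hne k), map_sub, hFg, hFg]
        by_cases hr : (relGraph t).Reachable i (t k).1
        · rw [if_pos (hr.trans hadj.reachable), if_pos hr, sub_self]
        · rw [if_neg (fun hb => hr (hb.trans hadj.symm.reachable)), if_neg hr, sub_self]
      | zero => exact map_zero F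
      | add x y hx hy ihx ihy => rw [map_add, ihx, ihy, add_zero]
      | smul c x hx ih => rw [hFsmul, ih, mul_zero]
    have hmem : taylorRel K m (dd m) i j ∈ Submodule.span (MvPolynomial (Fin (m + 1)) K)
        (Set.range fun k => taylorRel K m (dd m) (t k).1 (t k).2) := by
      rw [hspan]
      exact taylor_mem_ker K hij'
    have h1 := hF0 _ hmem
    rw [taylor_eq K hij', map_sub, hFg, hFg, if_neg hij,
      if_pos (SimpleGraph.Reachable.refl i), zero_sub] at h1
    exact one_ne_zero (neg_eq_zero.1 h1)
  -- edge count
  have hsub : (relGraph t).edgeFinset ⊆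
      Finset.image (fun k => s((t k).1, (t k).2)) Finset.univ := by
    intro e he
    induction e using Sym2.ind with
    | _ x y =>
      rw [SimpleGraph.mem_edgeFinset, SimpleGraph.mem_edgeSet, relGraph,
        SimpleGraph.fromRel_adj] at he
      obtain ⟨hxy, ⟨k, hk⟩ | ⟨k, hk⟩⟩ := he
      · exact Finset.mem_image.2 ⟨k, Finset.mem_univ k, by rw [hk]⟩
      · exact Finset.mem_image.2 ⟨k, Finset.mem_univ k, by rw [hk]; exact Sym2.eq_swap⟩
  have hcard : (relGraph t).edgeFinset.card ≤ m :=
    le_trans (Finset.card_le_card hsub) (le_trans Finset.card_image_le (by simp))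
  exact isTree_of_connected_of_card hconn (by simpa using Nat.add_le_add_right hcard 1)

theorem tree_mem {Γ : SimpleGraph (Fin (m + 1))} (hΓ : Γ.IsTree) :
    ∃ t, IsHB K m (dd m) t ∧ relGraph t = Γ := by
  classical
  have hecard : Γ.edgeFinset.card = m := by
    have h := hΓ.card_edgeFinset
    simpa using h
  let eqv : {x // x ∈ Γ.edgeFinset} ≃ Fin m := Finset.equivFinOfCardEq hecard
  let t : Fin m → Fin (m + 1) × Fin (m + 1) := fun k => (eqv.symm k : Sym2 (Fin (m + 1))).out
  have hmk : ∀ k, Sym2.mk (t k).1 (t k).2 = (eqv.symm k : Sym2 (Fin (m + 1))) := fun k => Quot.out_eq _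
  have hadj : ∀ k, Γ.Adj (t k).1 (t k).2 := by
    intro k
    have hmem : ((eqv.symm k : {x // x ∈ Γ.edgeFinset}) : Sym2 (Fin (m + 1))) ∈ Γ.edgeSet :=
      SimpleGraph.mem_edgeFinset.1 (eqv.symm k).2
    rw [← hmk k] at hmem
    exact hmem
  have pair_eq : ∀ (p : Fin (m + 1) × Fin (m + 1)) (a b : Fin (m + 1)),
      Sym2.mk p.1 p.2 = s(a, b) → p = (a, b) ∨ p = (b, a) := by
    rintro ⟨x, y⟩ a b hp
    rw [Sym2.eq_iff] at hp
    rcases hp with ⟨rfl, rfl⟩ | ⟨rfl, rfl⟩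
    · exact Or.inl rfl
    · exact Or.inr rfl
  have hsurj : ∀ a b, Γ.Adj a b → ∃ k, t k = (a, b) ∨ t k = (b, a) := by
    intro a b hab
    refine ⟨eqv ⟨s(a, b), SimpleGraph.mem_edgeFinset.2 hab⟩, ?_⟩
    refine pair_eq _ a b ?_
    rw [hmk, Equiv.symm_apply_apply]
  set W := Submodule.span (MvPolynomial (Fin (m + 1)) K)
    (Set.range fun k => taylorRel K m (dd m) (t k).1 (t k).2) with hW
  have hedge_mem : ∀ a b, Γ.Adj a b → gvec K b - gvec K a ∈ W := by
    intro a b hab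
    obtain ⟨k, hk | hk⟩ := hsurj a b hab
    · have hmem : taylorRel K m (dd m) (t k).1 (t k).2 ∈ W := Submodule.subset_span ⟨k, rfl⟩
      rw [taylor_eq K (hadj k).ne, hk] at hmem
      exact hmem
    · have hmem : taylorRel K m (dd m) (t k).1 (t k).2 ∈ W := Submodule.subset_span ⟨k, rfl⟩
      rw [taylor_eq K (hadj k).ne, hk] at hmem
      rw [← neg_sub]
      exact Submodule.neg_mem _ hmem
  have hwalk : ∀ {x y : Fin (m + 1)} (_ : Γ.Walk x y), gvec K y - gvec K x ∈ W := by
    intro x y p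
    induction p with
    | nil => rw [sub_self]; exact Submodule.zero_mem _
    | @cons x c y h q ih =>
      have h1 := hedge_mem x c h
      have heq : gvec K y - gvec K x = (gvec K y - gvec K c) + (gvec K c - gvec K x) := by
        abel
      rw [heq]
      exact Submodule.add_mem _ ih h1
  refine ⟨t, ⟨fun k => (hadj k).ne, le_antisymm ?_ ?_⟩, ?_⟩
  · rw [Submodule.span_le]
    rintro x ⟨k, rfl⟩
    exact SetLike.mem_coe.mpr (taylor_mem_ker K (hadj k).ne)
  · refine le_trans (ker_le_star K) ?_
    rw [Submodule.span_le]
    rintro x ⟨i, rfl⟩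
    obtain ⟨p⟩ := hΓ.isConnected.preconnected 0 i
    exact SetLike.mem_coe.mpr (hwalk p)
  · ext a b
    rw [relGraph, SimpleGraph.fromRel_adj]
    constructor
    · rintro ⟨hab, ⟨k, hk⟩ | ⟨k, hk⟩⟩
      · have := hadj k
        rw [hk] at this
        exact this
      · have := hadj k
        rw [hk] at this
        exact this.symm
    · intro hab
      rcases hsurj a b hab with ⟨k, hk⟩
      exact ⟨hab.ne, hk.imp (fun h => ⟨k, h⟩) (fun h => ⟨k, h⟩)⟩

end MainParts

end Statement10Aux

/-- Let `I = (u_1,...,u_{m+1})` be the monomial ideal in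
`K[x_1,...,x_{m+1}]` with `u_i = x_1 ⋯ x_{i-1} · x_{i+1} ⋯ x_{m+1}` (the product of all
variables except `x_i`). Then `T(I)` is the set of ALL trees on the vertex set `[m+1]`. -/
theorem statement10 (K : Type*) [Field K] {m : ℕ} :
    relTrees K m (fun i : Fin (m + 1) => ∑ k ∈ Finset.univ.erase i, Finsupp.single k 1) =
      {Γ : SimpleGraph (Fin (m + 1)) | Γ.IsTree} := by
  ext Γ
  constructor
  · rintro ⟨t, ⟨hne, hspan⟩, rfl⟩
    exact Statement10Aux.relGraph_isTree K hne hspan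
  · intro hΓ
    exact Statement10Aux.tree_mem K hΓ
end

section
/- Let I ⊂ S be a Cohen–Macaulay monomial ideal of codimension 2 with a linear resolution. Then T(I) = T(G(I)): the set of relation trees of I is exactly the set of spanning trees of the Taylor graph G(I). -/
open MvPolynomial

namespace Aux12

open CMCodim2

variable {K : Type*} [Field K] {σ : Type*} {m : ℕ}

/-! ### Finsupp exponent helpers -/

noncomputable def lcmE (a b : σ →₀ ℕ) : σ →₀ ℕ := a - b + b

lemma lcmE_apply (a b : σ →₀ ℕ) (s : σ) : lcmE a b s = max (a s) (b s) := by
  simp only [lcmE, Finsupp.add_apply, Finsupp.tsub_apply]; omega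

lemma finsupp_le_iff {a b : σ →₀ ℕ} : a ≤ b ↔ ∀ s, a s ≤ b s := Finsupp.le_def

lemma lcmE_comm (a b : σ →₀ ℕ) : lcmE a b = lcmE b a := by
  ext s; rw [lcmE_apply, lcmE_apply]; omega

lemma le_lcmE_left (a b : σ →₀ ℕ) : a ≤ lcmE a b := by
  rw [finsupp_le_iff]; intro s; rw [lcmE_apply]; omega

lemma le_lcmE_right (a b : σ →₀ ℕ) : b ≤ lcmE a b := by
  rw [finsupp_le_iff]; intro s; rw [lcmE_apply]; omega

lemma lcmE_le {a b D : σ →₀ ℕ} (ha : a ≤ D) (hb : b ≤ D) : lcmE a b ≤ D := by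
  rw [finsupp_le_iff] at *; intro s; rw [lcmE_apply]; exact max_le (ha s) (hb s)

lemma tsub_eq_lcmE_tsub (a b : σ →₀ ℕ) : a - b = lcmE a b - b := by
  ext s; simp only [Finsupp.tsub_apply, lcmE_apply]; omega

lemma tsub_add_tsub {A B C : σ →₀ ℕ} (h1 : C ≤ B) (h2 : B ≤ A) :
    (A - B) + (B - C) = A - C := by
  rw [finsupp_le_iff] at h1 h2
  ext s; have := h1 s; have := h2 s
  simp only [Finsupp.add_apply, Finsupp.tsub_apply]; omega

lemma mdeg_add (a b : σ →₀ ℕ) : mdeg (a + b) = mdeg a + mdeg b := by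
  simp only [mdeg]
  exact Finsupp.sum_add_index' (fun _ => rfl) (fun _ _ _ => rfl)

lemma mdeg_eq_zero {a : σ →₀ ℕ} (h : mdeg a = 0) : a = 0 := by
  ext s
  simp only [Finsupp.coe_zero, Pi.zero_apply]
  by_contra hs
  have hmem : s ∈ a.support := Finsupp.mem_support_iff.mpr hs
  have : a s ≤ mdeg a := Finset.single_le_sum (f := fun t => a t) (fun _ _ => Nat.zero_le _) hmem
  omega

lemma eq_of_le_of_mdeg_le {a b : σ →₀ ℕ} (h : a ≤ b) (hd : mdeg b ≤ mdeg a) : a = b := by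
  have hab : a + (b - a) = b := add_tsub_cancel_of_le h
  have := mdeg_add a (b - a)
  rw [hab] at this
  have h0 : mdeg (b - a) = 0 := by omega
  have := mdeg_eq_zero h0
  rw [← hab, this, add_zero]

/-! ### Monomial helpers -/

lemma mono_mul (a b : σ →₀ ℕ) :
    (monomial a 1 : MvPolynomial σ K) * monomial b 1 = monomial (a + b) 1 := by
  simp [monomial_mul]

lemma mono_ne_zero (a : σ →₀ ℕ) : (monomial a 1 : MvPolynomial σ K) ≠ 0 := by
  simp

lemma le_of_mono_dvd {a b : σ →₀ ℕ}
    (h : (monomial a 1 : MvPolynomial σ K) ∣ monomial b 1) : a ≤ b := by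
  rcases monomial_dvd_monomial.mp h with h | h
  · simp at h
  · exact h

/-! ### Taylor relation computations -/

lemma rel_apply_right (d : Fin (m + 1) → (σ →₀ ℕ)) (i j : Fin (m + 1)) :
    taylorRel K m d i j j = monomial (d i - d j) 1 := by
  simp [taylorRel]

lemma rel_apply_left (d : Fin (m + 1) → (σ →₀ ℕ)) {i j : Fin (m + 1)} (h : i ≠ j) :
    taylorRel K m d i j i = -(monomial (d j - d i) 1) := by
  simp [taylorRel, h]

lemma rel_apply_other (d : Fin (m + 1) → (σ →₀ ℕ)) {i j k : Fin (m + 1)}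
    (h1 : k ≠ i) (h2 : k ≠ j) : taylorRel K m d i j k = 0 := by
  simp [taylorRel, h1, h2]

lemma rel_neg (d : Fin (m + 1) → (σ →₀ ℕ)) {i j : Fin (m + 1)} (h : i ≠ j) :
    taylorRel K m d j i = -taylorRel K m d i j := by
  funext k
  simp only [taylorRel, Pi.neg_apply]
  by_cases hkj : k = j <;> by_cases hki : k = i
  · exact absurd (hki.symm.trans hkj) h
  · simp [hkj, hki, h, h.symm]
  · simp [hkj, hki, h, h.symm]
  · simp [hkj, hki, h, h.symm]

lemma sum_two {M : Type*} [AddCommMonoid M] {N : ℕ} (f : Fin N → M) {a b : Fin N}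
    (hab : a ≠ b) (h : ∀ c, c ≠ a → c ≠ b → f c = 0) : ∑ i, f i = f a + f b := by
  classical
  rw [← Finset.sum_subset (Finset.subset_univ {a, b})]
  · rw [Finset.sum_pair hab]
  · intro x _ hx; simp only [Finset.mem_insert, Finset.mem_singleton, not_or] at hx
    exact h x hx.1 hx.2

lemma phi_apply (d : Fin (m + 1) → (σ →₀ ℕ)) (v : Fin (m + 1) → MvPolynomial σ K) :
    phi K m d v = ∑ i, v i * monomial (d i) 1 := rfl

lemma phi_rel (d : Fin (m + 1) → (σ →₀ ℕ)) {i j : Fin (m + 1)} (h : i ≠ j) :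
    phi K m d (taylorRel K m d i j) = 0 := by
  rw [phi_apply, sum_two _ h.symm
    (fun c hcj hci => by rw [rel_apply_other d hci hcj, zero_mul])]
  rw [rel_apply_right, rel_apply_left d h, neg_mul, mono_mul, mono_mul]
  rw [show d i - d j + d j = d j - d i + d i by
    ext s; simp only [Finsupp.add_apply, Finsupp.tsub_apply]; omega]
  ring


/-! ### The cut functional psi -/

open scoped Classical in
noncomputable def psi (d : Fin (m + 1) → (σ →₀ ℕ)) (A : Set (Fin (m + 1))) :
    (Fin (m + 1) → MvPolynomial σ K) →ₗ[MvPolynomial σ K] MvPolynomial σ K where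
  toFun v := ∑ i, if i ∈ A then v i * monomial (d i) 1 else 0
  map_add' x y := by
    classical
    rw [← Finset.sum_add_distrib]
    exact Finset.sum_congr rfl fun i _ => by by_cases h : i ∈ A <;> simp [h, add_mul]
  map_smul' c x := by
    classical
    simp only [RingHom.id_apply]
    rw [Finset.smul_sum]
    exact Finset.sum_congr rfl fun i _ => by
      by_cases h : i ∈ A <;> simp [h, smul_eq_mul, mul_assoc]

open scoped Classical in
lemma psi_apply (d : Fin (m + 1) → (σ →₀ ℕ)) (A : Set (Fin (m + 1)))
    (v : Fin (m + 1) → MvPolynomial σ K) :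
    psi d A v = ∑ i, if i ∈ A then v i * monomial (d i) 1 else 0 := rfl

lemma psi_rel_both_in (d : Fin (m + 1) → (σ →₀ ℕ)) {A : Set (Fin (m + 1))}
    {p q : Fin (m + 1)} (hp : p ∈ A) (hq : q ∈ A) (hpq : p ≠ q) :
    psi (K := K) d A (taylorRel K m d p q) = 0 := by
  classical
  rw [psi_apply, sum_two _ hpq.symm (fun c hcq hcp => by
    by_cases hc : c ∈ A
    · rw [if_pos hc, rel_apply_other d hcp hcq, zero_mul]
    · exact if_neg hc)]
  rw [if_pos hq, if_pos hp, rel_apply_right, rel_apply_left d hpq, neg_mul, mono_mul, mono_mul,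
    show d p - d q + d q = d q - d p + d p from by
      ext s; simp only [Finsupp.add_apply, Finsupp.tsub_apply]; omega]
  ring

lemma psi_rel_both_out (d : Fin (m + 1) → (σ →₀ ℕ)) {A : Set (Fin (m + 1))}
    {p q : Fin (m + 1)} (hp : p ∉ A) (hq : q ∉ A) (hpq : p ≠ q) :
    psi (K := K) d A (taylorRel K m d p q) = 0 := by
  classical
  rw [psi_apply]
  apply Finset.sum_eq_zero
  intro i _
  by_cases hi : i ∈ A
  · rw [if_pos hi,
      rel_apply_other d (show i ≠ p from fun h => hp (by rw [← h]; exact hi))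
        (show i ≠ q from fun h => hq (by rw [← h]; exact hi)), zero_mul]
  · exact if_neg hi

lemma psi_rel_in_out (d : Fin (m + 1) → (σ →₀ ℕ)) {A : Set (Fin (m + 1))}
    {p q : Fin (m + 1)} (hp : p ∈ A) (hq : q ∉ A) (hpq : p ≠ q) :
    psi (K := K) d A (taylorRel K m d p q) = -(monomial (lcmE (d q) (d p)) 1) := by
  classical
  rw [psi_apply, sum_two _ hpq.symm (fun c hcq hcp => by
    by_cases hc : c ∈ A
    · rw [if_pos hc, rel_apply_other d hcp hcq, zero_mul]
    · exact if_neg hc)]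
  rw [if_neg hq, if_pos hp, rel_apply_left d hpq, neg_mul, mono_mul, zero_add]
  rfl

lemma psi_rel_out_in (d : Fin (m + 1) → (σ →₀ ℕ)) {A : Set (Fin (m + 1))}
    {p q : Fin (m + 1)} (hp : p ∉ A) (hq : q ∈ A) (hpq : p ≠ q) :
    psi (K := K) d A (taylorRel K m d p q) = monomial (lcmE (d p) (d q)) 1 := by
  classical
  rw [psi_apply, sum_two _ hpq.symm (fun c hcq hcp => by
    by_cases hc : c ∈ A
    · rw [if_pos hc, rel_apply_other d hcp hcq, zero_mul]
    · exact if_neg hc)]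
  rw [if_pos hq, if_neg hp, rel_apply_right, mono_mul, add_zero]
  rfl


/-! ### The Taylor syzygy theorem: ker phi is spanned by the Taylor relations -/

theorem ker_phi_eq_span (d : Fin (m + 1) → (σ →₀ ℕ)) :
    LinearMap.ker (phi K m d) =
      Submodule.span (MvPolynomial σ K)
        {w | ∃ i j : Fin (m + 1), i ≠ j ∧ w = taylorRel K m d i j} := by
  classical
  apply le_antisymm
  · intro v hv
    rw [LinearMap.mem_ker] at hv
    have claim : ∀ s : Finset (Fin (m + 1)), ∀ v : Fin (m + 1) → MvPolynomial σ K,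
        (∀ i, i ∉ s → v i = 0) → phi K m d v = 0 →
        v ∈ Submodule.span (MvPolynomial σ K)
          {w | ∃ i j : Fin (m + 1), i ≠ j ∧ w = taylorRel K m d i j} := by
      intro s
      induction s using Finset.induction_on with
      | empty =>
        intro v hv0 _
        have : v = 0 := funext fun i => hv0 i (Finset.notMem_empty i)
        rw [this]; exact Submodule.zero_mem _
      | @insert a s₂ ha ih =>
        intro v hv0 hphi
        have h1 : ∑ i ∈ insert a s₂, v i * monomial (d i) 1 = 0 := by
          rw [Finset.sum_subset (Finset.subset_univ _) (fun x _ hx => by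
            rw [hv0 x hx, zero_mul])]
          rw [← phi_apply, hphi]
        rw [Finset.sum_insert ha] at h1
        have hP : v a * monomial (d a) 1 = -∑ i ∈ s₂, v i * monomial (d i) 1 :=
          eq_neg_of_add_eq_zero_left h1
        have hPmem : v a * monomial (d a) 1 ∈
            Ideal.span ((fun e => monomial e (1 : K)) '' (d '' (s₂ : Set (Fin (m+1))))) := by
          rw [hP]
          apply Submodule.neg_mem
          apply Ideal.sum_mem
          intro i hi
          exact Ideal.mul_mem_left _ _ (Ideal.subset_span ⟨d i, ⟨i, hi, rfl⟩, rfl⟩)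
        have hkey : ∀ μ ∈ (v a).support, ∃ i ∈ s₂, d i - d a ≤ μ := by
          intro μ hμ
          have hsup : μ + d a ∈ (v a * monomial (d a) 1).support := by
            rw [mem_support_iff, coeff_mul_monomial']
            simp only [le_add_iff_nonneg_left, zero_le, if_true, add_tsub_cancel_right,
              mul_one]
            exact mem_support_iff.mp hμ
          obtain ⟨si, ⟨i, hi, rfl⟩, hle⟩ := mem_ideal_span_monomial_image.mp hPmem _ hsup
          refine ⟨i, hi, ?_⟩
          rw [finsupp_le_iff] at hle ⊢
          intro t
          have := hle t
          simp only [Finsupp.add_apply] at this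
          simp only [Finsupp.tsub_apply]
          omega
        have hva : v a ∈ Submodule.span (MvPolynomial σ K)
            (Set.range fun i : ↥(s₂ : Set (Fin (m+1))) => (monomial (d i.1 - d a) (1 : K))) := by
          have h2 : v a ∈
              Ideal.span ((fun i => monomial (d i - d a) (1:K)) '' (s₂ : Set (Fin (m+1)))) := by
            have h3 : v a ∈ Ideal.span
                ((fun e => monomial e (1 : K)) '' ((fun i => d i - d a) '' (s₂ : Set (Fin (m+1))))) := by
              rw [mem_ideal_span_monomial_image]
              intro μ hμ
              obtain ⟨i, hi, hle⟩ := hkey μ hμ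
              exact ⟨d i - d a, ⟨i, hi, rfl⟩, hle⟩
            rw [Set.image_image] at h3
            exact h3
          rw [Set.image_eq_range] at h2
          exact h2
        rw [Submodule.mem_span_range_iff_exists_fun] at hva
        obtain ⟨c, hc⟩ := hva
        set w := v - ∑ i : ↥(s₂ : Set (Fin (m+1))), c i • taylorRel K m d i.1 a with hw
        have hsummem : (∑ i : ↥(s₂ : Set (Fin (m+1))), c i • taylorRel K m d i.1 a) ∈
            Submodule.span (MvPolynomial σ K)
              {w | ∃ i j : Fin (m + 1), i ≠ j ∧ w = taylorRel K m d i j} :=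
          Submodule.sum_mem _ fun i _ =>
            Submodule.smul_mem _ _ (Submodule.subset_span
              ⟨i.1, a, fun h => ha (by rw [← h]; exact i.2), rfl⟩)
        have hw0 : ∀ x, x ∉ s₂ → w x = 0 := by
          intro x hx
          rw [hw]
          simp only [Pi.sub_apply, Finset.sum_apply, Pi.smul_apply]
          by_cases hxa : x = a
          · subst hxa
            rw [show (∑ i : ↥(s₂ : Set (Fin (m+1))), c i • taylorRel K m d i.1 x x)
                = ∑ i : ↥(s₂ : Set (Fin (m+1))), c i • (monomial (d i.1 - d x) (1:K)) from
              Finset.sum_congr rfl fun i _ => by rw [rel_apply_right]]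
            rw [hc, sub_self]
          · rw [hv0 x (by simp [hx, hxa])]
            rw [show (∑ i : ↥(s₂ : Set (Fin (m+1))), c i • taylorRel K m d i.1 a x) = 0 from
              Finset.sum_eq_zero fun i _ => by
                rw [rel_apply_other d (fun h => hx (by rw [h]; exact i.2)) hxa, smul_zero]]
            rw [sub_zero]
        have hphiw : phi K m d w = 0 := by
          rw [hw, map_sub, hphi, map_sum]
          rw [show (∑ i : ↥(s₂ : Set (Fin (m+1))), phi K m d (c i • taylorRel K m d i.1 a)) = 0 from
            Finset.sum_eq_zero fun i _ => by
              rw [map_smul, phi_rel d (fun h => ha (by rw [← h]; exact i.2)), smul_zero]]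
          simp
        have hwmem := ih w hw0 hphiw
        have hveq : v = w + ∑ i : ↥(s₂ : Set (Fin (m+1))), c i • taylorRel K m d i.1 a := by
          rw [hw]; abel
        rw [hveq]
        exact Submodule.add_mem _ hwmem hsummem
    exact claim Finset.univ v (fun i hi => absurd (Finset.mem_univ i) hi) hv
  · rw [Submodule.span_le]
    rintro w ⟨i, j, hij, rfl⟩
    rw [SetLike.mem_coe, LinearMap.mem_ker]
    exact phi_rel d hij


/-! ### Graph utilities -/

section Graphs

open SimpleGraph

variable {V : Type*}

/-- single-edge graph -/
def GE (a b : V) : SimpleGraph V := fromEdgeSet {s(a, b)}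

lemma GE_adj {a b x y : V} : (GE a b).Adj x y ↔ s(x, y) = s(a, b) ∧ x ≠ y := by
  simp [GE]

lemma reach_decomp {G : SimpleGraph V} {a b x y : V}
    (h : (G ⊔ GE a b).Reachable x y) :
    G.Reachable x y ∨ (G.Reachable x a ∧ G.Reachable b y) ∨
      (G.Reachable x b ∧ G.Reachable a y) := by
  obtain ⟨w⟩ := h
  induction w with
  | nil => exact Or.inl (Reachable.refl _)
  | cons hadj w ih =>
    rename_i u z w'
    rcases (SimpleGraph.sup_adj _ _ _ _).mp hadj with hG | hE
    · rcases ih with h1 | ⟨h1, h2⟩ | ⟨h1, h2⟩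
      · exact Or.inl ((Adj.reachable hG).trans h1)
      · exact Or.inr (Or.inl ⟨(Adj.reachable hG).trans h1, h2⟩)
      · exact Or.inr (Or.inr ⟨(Adj.reachable hG).trans h1, h2⟩)
    · rcases GE_adj.mp hE with ⟨hs, hne⟩
      rcases Sym2.eq_iff.mp hs with ⟨rfl, rfl⟩ | ⟨rfl, rfl⟩
      · rcases ih with h1 | ⟨h1, h2⟩ | ⟨h1, h2⟩
        · exact Or.inr (Or.inl ⟨Reachable.refl _, h1⟩)
        · exact Or.inr (Or.inl ⟨Reachable.refl _, h2⟩)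
        · exact Or.inl h2
      · rcases ih with h1 | ⟨h1, h2⟩ | ⟨h1, h2⟩
        · exact Or.inr (Or.inr ⟨Reachable.refl _, h1⟩)
        · exact Or.inl h2
        · exact Or.inr (Or.inr ⟨Reachable.refl _, h2⟩)

lemma sup_GE_delete {G : SimpleGraph V} {a b : V} (h : G.Adj a b) :
    (G.deleteEdges {s(a, b)}) ⊔ GE a b = G := by
  ext x y
  simp only [SimpleGraph.sup_adj, SimpleGraph.deleteEdges_adj, Set.mem_singleton_iff, GE_adj]
  constructor
  · rintro (⟨hG, _⟩ | ⟨hs, hne⟩)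
    · exact hG
    · rcases Sym2.eq_iff.mp hs with ⟨rfl, rfl⟩ | ⟨rfl, rfl⟩
      · exact h
      · exact h.symm
  · intro hG
    by_cases hs : s(x, y) = s(a, b)
    · exact Or.inr ⟨hs, hG.ne⟩
    · exact Or.inl ⟨hG, hs⟩

lemma decomp_del {G : SimpleGraph V} {a b x y : V} (h : G.Adj a b)
    (hr : G.Reachable x y) :
    (G.deleteEdges {s(a, b)}).Reachable x y ∨
      ((G.deleteEdges {s(a, b)}).Reachable x a ∧ (G.deleteEdges {s(a, b)}).Reachable b y) ∨
      ((G.deleteEdges {s(a, b)}).Reachable x b ∧ (G.deleteEdges {s(a, b)}).Reachable a y) := by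
  apply reach_decomp
  rw [sup_GE_delete h]
  exact hr

lemma reach_endpoint {G : SimpleGraph V} {a b x : V} (h : G.Adj a b)
    (hr : G.Reachable x a) :
    (G.deleteEdges {s(a, b)}).Reachable x a ∨ (G.deleteEdges {s(a, b)}).Reachable x b := by
  rcases decomp_del h hr with h1 | ⟨h1, _⟩ | ⟨h1, _⟩
  · exact Or.inl h1
  · exact Or.inl h1
  · exact Or.inr h1

lemma bridge_of_acyclic {G : SimpleGraph V} (hac : G.IsAcyclic) {a b : V} (h : G.Adj a b) :
    ¬(G.deleteEdges {s(a, b)}).Reachable a b := by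
  have := (isAcyclic_iff_forall_adj_isBridge.mp hac) h
  rw [isBridge_iff] at this
  exact this

lemma sep_of_path_edge {G : SimpleGraph V} (hac : G.IsAcyclic) {i j x y : V}
    (w : G.Walk i j) (hw : w.IsPath) (hmem : s(x, y) ∈ w.edges) :
    ¬(G.deleteEdges {s(x, y)}).Reachable i j := by
  induction w with
  | nil => simp at hmem
  | cons hadj w' ih =>
    rename_i u z jj
    have hnodup : s(u, z) ∉ w'.edges := by
      have := hw.edges_nodup
      rw [SimpleGraph.Walk.edges_cons] at this
      exact (List.nodup_cons.mp this).1
    rw [SimpleGraph.Walk.edges_cons, List.mem_cons] at hmem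
    rcases hmem with heq | hmem
    · -- first edge is the deleted one
      intro hreach
      have hbr : ¬(G.deleteEdges {s(x, y)}).Reachable u z := by
        rcases Sym2.eq_iff.mp heq with ⟨rfl, rfl⟩ | ⟨rfl, rfl⟩
        · exact bridge_of_acyclic hac hadj
        · intro hr
          exact bridge_of_acyclic hac hadj.symm hr.symm
      have hzj : (G.deleteEdges {s(x, y)}).Reachable z jj := by
        refine ⟨w'.toDeleteEdges _ ?_⟩
        intro e he
        rw [Set.mem_singleton_iff]
        intro hcon
        rw [← hcon] at heq
        exact hnodup (heq ▸ he)
      exact hbr (hreach.trans hzj.symm)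
    · intro hreach
      have h1 : s(u, z) ≠ s(x, y) := fun hcon => hnodup (hcon ▸ hmem)
      have hadj' : (G.deleteEdges {s(x, y)}).Adj u z := by
        rw [SimpleGraph.deleteEdges_adj]
        exact ⟨hadj, by simpa using h1⟩
      exact ih hw.of_cons hmem ((hadj'.reachable.symm).trans hreach)


open scoped Classical in
lemma card_le_edges {V : Type*} [Fintype V] {G : SimpleGraph V} [Fintype G.edgeSet]
    (h : G.Connected) : Fintype.card V ≤ G.edgeFinset.card + 1 := by
  classical
  have hne : Nonempty V := h.nonempty
  obtain ⟨r⟩ := hne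
  -- for every v ≠ r there is a neighbour strictly closer to r
  have hstep : ∀ v : V, v ≠ r → ∃ z : V, G.Adj v z ∧ G.dist z r + 1 = G.dist v r := by
    intro v hv
    obtain ⟨p, hp⟩ := (h v r).exists_walk_length_eq_dist
    cases p with
    | nil => exact absurd rfl hv
    | cons hadj p' =>
      rename_i z
      refine ⟨z, hadj, ?_⟩
      have h1 : G.dist z r ≤ p'.length := SimpleGraph.dist_le p'
      have h2 : G.dist v r ≤ G.dist z r + 1 := by
        obtain ⟨q, hq⟩ := (h z r).exists_walk_length_eq_dist
        have := SimpleGraph.dist_le (SimpleGraph.Walk.cons hadj q)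
        rw [SimpleGraph.Walk.length_cons, hq] at this
        omega
      rw [SimpleGraph.Walk.length_cons] at hp
      omega
  let f : V → Sym2 V := fun v =>
    if hv : v = r then s(r, r) else s(v, (hstep v hv).choose)
  have hinj : Set.InjOn f ↑(Finset.univ.erase r) := by
    intro v hv w hw hvw
    simp only [Finset.coe_erase, Set.mem_diff, Set.mem_singleton_iff] at hv hw
    have hv' : v ≠ r := by simpa using hv.2
    have hw' : w ≠ r := by simpa using hw.2
    simp only [f, dif_neg hv', dif_neg hw'] at hvw
    rcases Sym2.eq_iff.mp hvw with ⟨h1, _⟩ | ⟨h1, h2⟩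
    · exact h1
    · exfalso
      have hd1 := (hstep v hv').choose_spec.2
      have hd2 := (hstep w hw').choose_spec.2
      rw [h2] at hd1
      rw [← h1] at hd2
      omega
  have hmaps : ∀ v ∈ Finset.univ.erase r, f v ∈ G.edgeFinset := by
    intro v hv
    have hv' : v ≠ r := Finset.ne_of_mem_erase hv
    simp only [f, dif_neg hv']
    rw [SimpleGraph.mem_edgeFinset, SimpleGraph.mem_edgeSet]
    exact (hstep v hv').choose_spec.1
  have := Finset.card_le_card_of_injOn f hmaps hinj
  rw [Finset.card_erase_of_mem (Finset.mem_univ r), Finset.card_univ] at this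
  have hpos : 0 < Fintype.card V := Fintype.card_pos_iff.mpr ⟨r⟩
  omega

open scoped Classical in
lemma tree_of_connected_edges_le {V : Type*} [Fintype V] {G : SimpleGraph V}
    [Fintype G.edgeSet] (h : G.Connected)
    (hcard : G.edgeFinset.card + 1 ≤ Fintype.card V) : G.IsTree := by
  classical
  refine ⟨h, ?_⟩
  intro v c hc
  -- pick an edge of the cycle
  have hl : 3 ≤ c.length := hc.three_le_length
  have hene : c.edges ≠ [] := by
    intro hcon
    have := SimpleGraph.Walk.length_edges c
    rw [hcon] at this
    simp at this
    omega
  obtain ⟨e, he⟩ : ∃ e, e ∈ c.edges := List.exists_mem_of_ne_nil _ hene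
  obtain ⟨x, y⟩ := e
  have hadj : G.Adj x y := SimpleGraph.Walk.adj_of_mem_edges c he
  -- the edge is not a bridge
  have hnb : (G.deleteEdges {s(x, y)}).Reachable x y := by
    by_contra hcon
    have hbr : G.IsBridge s(x, y) := SimpleGraph.isBridge_iff.mpr hcon
    rw [SimpleGraph.isBridge_iff_adj_and_forall_cycle_notMem hadj] at hbr
    exact hbr c hc he
  -- the deleted graph is connected
  have hconn' : (G.deleteEdges {s(x, y)}).Connected := by
    rw [SimpleGraph.connected_iff]
    refine ⟨?_, h.nonempty⟩
    intro p q
    rcases decomp_del hadj (h p q) with h1 | ⟨h1, h2⟩ | ⟨h1, h2⟩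
    · exact h1
    · exact (h1.trans hnb).trans h2
    · exact (h1.trans hnb.symm).trans h2
  have hle := card_le_edges hconn'
  have hedges : (G.deleteEdges {s(x, y)}).edgeFinset = G.edgeFinset.erase s(x, y) := by
    ext e'
    simp only [SimpleGraph.mem_edgeFinset, SimpleGraph.edgeSet_deleteEdges,
      Set.mem_diff, Set.mem_singleton_iff, Finset.mem_erase]
    tauto
  rw [hedges, Finset.card_erase_of_mem (by
    rw [SimpleGraph.mem_edgeFinset, SimpleGraph.mem_edgeSet]; exact hadj)] at hle
  have hmem : s(x, y) ∈ G.edgeFinset := by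
    rw [SimpleGraph.mem_edgeFinset, SimpleGraph.mem_edgeSet]; exact hadj
  have hpos : 0 < G.edgeFinset.card := Finset.card_pos.mpr ⟨_, hmem⟩
  omega

end Graphs


/-! ### The Good predicate for row systems -/

section Rows

open SimpleGraph

variable (d : Fin (m + 1) → (σ →₀ ℕ)) (t : Fin m → Fin (m + 1) × Fin (m + 1))

def rowE (t : Fin m → Fin (m + 1) × Fin (m + 1)) (k : Fin m) : Sym2 (Fin (m + 1)) :=
  s((t k).1, (t k).2)

def cutG (t : Fin m → Fin (m + 1) × Fin (m + 1)) (k : Fin m) : SimpleGraph (Fin (m + 1)) :=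
  (relGraph t).deleteEdges {rowE t k}

def Good : Prop :=
  (∀ k, (t k).1 ≠ (t k).2) ∧ (relGraph t).IsTree ∧
    ∀ k p q, ¬(cutG t k).Reachable p q →
      lcmE (d (t k).1) (d (t k).2) ≤ lcmE (d p) (d q)

variable {d t}

lemma relGraph_adj {x y : Fin (m + 1)} :
    (relGraph t).Adj x y ↔ x ≠ y ∧ ((∃ k, t k = (x, y)) ∨ ∃ k, t k = (y, x)) :=
  SimpleGraph.fromRel_adj _ x y

lemma row_adj (hne : ∀ k, (t k).1 ≠ (t k).2) (k : Fin m) :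
    (relGraph t).Adj (t k).1 (t k).2 :=
  relGraph_adj.mpr ⟨hne k, Or.inl ⟨k, rfl⟩⟩

open scoped Classical in
lemma edgeFinset_relGraph (hne : ∀ k, (t k).1 ≠ (t k).2) :
    (relGraph t).edgeFinset = Finset.image (rowE t) Finset.univ := by
  ext e
  induction e using Sym2.ind with
  | _ x y =>
    rw [SimpleGraph.mem_edgeFinset, SimpleGraph.mem_edgeSet, Finset.mem_image]
    constructor
    · intro hadj
      rcases relGraph_adj.mp hadj with ⟨hxy, ⟨k, hk⟩ | ⟨k, hk⟩⟩
      · exact ⟨k, Finset.mem_univ k, by rw [rowE, hk]⟩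
      · exact ⟨k, Finset.mem_univ k, by rw [rowE, hk]; exact Sym2.eq_swap⟩
    · rintro ⟨k, -, hk⟩
      rw [rowE] at hk
      rcases Sym2.eq_iff.mp hk with ⟨h1, h2⟩ | ⟨h1, h2⟩
      · exact relGraph_adj.mpr ⟨by rw [← h1, ← h2]; exact hne k,
          Or.inl ⟨k, by rw [← h1, ← h2]⟩⟩
      · exact relGraph_adj.mpr ⟨by rw [← h1, ← h2]; exact (hne k).symm,
          Or.inr ⟨k, by rw [← h1, ← h2]⟩⟩

lemma hb_preconn (hHB : IsHB K m d t) : (relGraph t).Preconnected := by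
  intro p q
  by_contra hnr
  have hpq : p ≠ q := fun h => hnr (h ▸ Reachable.refl p)
  set A : Set (Fin (m + 1)) := {x | (relGraph t).Reachable p x} with hA
  have hrelmem : taylorRel K m d p q ∈ LinearMap.ker (phi K m d) :=
    LinearMap.mem_ker.mpr (phi_rel d hpq)
  rw [← hHB.2, Submodule.mem_span_range_iff_exists_fun] at hrelmem
  obtain ⟨c, hc⟩ := hrelmem
  have happ := congrArg (psi (K := K) d A) hc
  rw [map_sum] at happ
  have hzero : ∀ k, psi (K := K) d A (c k • taylorRel K m d (t k).1 (t k).2) = 0 := by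
    intro k
    rw [map_smul]
    have hadj := row_adj hHB.1 k
    by_cases hmem : (t k).1 ∈ A
    · have h2 : (t k).2 ∈ A := Reachable.trans hmem hadj.reachable
      rw [psi_rel_both_in d hmem h2 (hHB.1 k), smul_zero]
    · have h2 : (t k).2 ∉ A := fun hh => hmem (Reachable.trans hh hadj.symm.reachable)
      rw [psi_rel_both_out d hmem h2 (hHB.1 k), smul_zero]
  rw [Finset.sum_eq_zero (fun k _ => hzero k)] at happ
  have hpA : p ∈ A := Reachable.refl p
  rw [psi_rel_in_out d hpA hnr hpq] at happ
  exact mono_ne_zero _ (neg_eq_zero.mp happ.symm)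

open scoped Classical in
lemma hb_tree (hHB : IsHB K m d t) : (relGraph t).IsTree := by
  classical
  have hconn : (relGraph t).Connected :=
    (SimpleGraph.connected_iff _).mpr ⟨hb_preconn hHB, ⟨0⟩⟩
  apply tree_of_connected_edges_le hconn
  have h1 : (relGraph t).edgeFinset.card ≤ m := by
    rw [edgeFinset_relGraph hHB.1]
    exact (Finset.card_image_le).trans (by simp)
  simp only [Fintype.card_fin]
  omega

open scoped Classical in
lemma good_inj (hne : ∀ k, (t k).1 ≠ (t k).2) (htree : (relGraph t).IsTree) :
    Function.Injective (rowE t) := by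
  classical
  have hcard : (relGraph t).edgeFinset.card + 1 = m + 1 := by
    have := htree.card_edgeFinset
    simpa using this
  have himage : (Finset.image (rowE t) Finset.univ).card = m := by
    rw [← edgeFinset_relGraph hne]; omega
  have hinj : Set.InjOn (rowE t) ↑(Finset.univ : Finset (Fin m)) := by
    apply Finset.injOn_of_card_image_eq
    rw [himage]; simp
  intro k k' hkk'
  exact hinj (Finset.mem_coe.mpr (Finset.mem_univ k)) (Finset.mem_coe.mpr (Finset.mem_univ k')) hkk'

lemma hb_covering (hHB : IsHB K m d t) (k₀ : Fin m) (p q : Fin (m + 1))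
    (hsep : ¬(cutG t k₀).Reachable p q) :
    lcmE (d (t k₀).1) (d (t k₀).2) ≤ lcmE (d p) (d q) := by
  classical
  have hinj := good_inj hHB.1 (hb_tree hHB)
  have hpq : p ≠ q := fun h => hsep (h ▸ Reachable.refl p)
  set A : Set (Fin (m + 1)) := {x | (cutG t k₀).Reachable p x} with hA
  have hrelmem : taylorRel K m d p q ∈ LinearMap.ker (phi K m d) :=
    LinearMap.mem_ker.mpr (phi_rel d hpq)
  rw [← hHB.2, Submodule.mem_span_range_iff_exists_fun] at hrelmem
  obtain ⟨c, hc⟩ := hrelmem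
  have happ := congrArg (psi (K := K) d A) hc
  rw [map_sum] at happ
  have hzero : ∀ k, k ≠ k₀ →
      psi (K := K) d A (c k • taylorRel K m d (t k).1 (t k).2) = 0 := by
    intro k hk
    rw [map_smul]
    have hadj : (cutG t k₀).Adj (t k).1 (t k).2 := by
      rw [cutG, SimpleGraph.deleteEdges_adj]
      refine ⟨row_adj hHB.1 k, ?_⟩
      rw [Set.mem_singleton_iff]
      exact fun hcon => hk (hinj hcon)
    by_cases hmem : (t k).1 ∈ A
    · have h2 : (t k).2 ∈ A := Reachable.trans hmem hadj.reachable
      rw [psi_rel_both_in d hmem h2 (hHB.1 k), smul_zero]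
    · have h2 : (t k).2 ∉ A := fun hh => hmem (Reachable.trans hh hadj.symm.reachable)
      rw [psi_rel_both_out d hmem h2 (hHB.1 k), smul_zero]
  rw [Finset.sum_eq_single k₀ (fun k _ hk => hzero k hk) (by simp)] at happ
  have hpA : p ∈ A := Reachable.refl p
  rw [psi_rel_in_out d hpA hsep hpq] at happ
  rw [map_smul] at happ
  -- now case on the position of the endpoints of row k₀
  have hne0 := hHB.1 k₀
  by_cases hmem1 : (t k₀).1 ∈ A
  · by_cases hmem2 : (t k₀).2 ∈ A
    · rw [psi_rel_both_in d hmem1 hmem2 hne0, smul_zero] at happ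
      exact absurd happ.symm (by simp [mono_ne_zero])
    · rw [psi_rel_in_out d hmem1 hmem2 hne0] at happ
      have hdvd : (monomial (lcmE (d (t k₀).2) (d (t k₀).1)) 1 : MvPolynomial σ K) ∣
          monomial (lcmE (d q) (d p)) 1 := by
        refine ⟨c k₀, ?_⟩
        have := happ.symm
        rw [smul_neg, smul_eq_mul] at this
        have h3 := neg_injective this
        rw [h3]; ring
      have := le_of_mono_dvd hdvd
      rw [lcmE_comm (d (t k₀).2), lcmE_comm (d q)] at this
      exact this
  · by_cases hmem2 : (t k₀).2 ∈ A
    · rw [psi_rel_out_in d hmem1 hmem2 hne0] at happ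
      have hdvd : (monomial (lcmE (d (t k₀).1) (d (t k₀).2)) 1 : MvPolynomial σ K) ∣
          monomial (lcmE (d q) (d p)) 1 := by
        refine ⟨-(c k₀), ?_⟩
        rw [smul_eq_mul] at happ
        rw [← neg_inj] at happ
        rw [neg_neg] at happ
        rw [← happ]; ring
      have := le_of_mono_dvd hdvd
      rw [lcmE_comm (d q)] at this
      exact this
    · rw [psi_rel_both_out d hmem1 hmem2 hne0, smul_zero] at happ
      exact absurd happ.symm (by simp [mono_ne_zero])

theorem hb_good (hHB : IsHB K m d t) : Good d t :=
  ⟨hHB.1, hb_tree hHB, fun k p q hsep => hb_covering hHB k p q hsep⟩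


/-! ### Sufficiency: Good implies IsHB -/

noncomputable def Fv (d : Fin (m + 1) → (σ →₀ ℕ)) (D : σ →₀ ℕ) (y : Fin (m + 1)) :
    Fin (m + 1) → MvPolynomial σ K := fun l => if l = y then monomial (D - d y) 1 else 0

lemma step_eq {D : σ →₀ ℕ} {x y : Fin (m + 1)} (hxy : x ≠ y) (hx : d x ≤ D) (hy : d y ≤ D) :
    Fv (K := K) d D y - Fv (K := K) d D x
      = (monomial (D - lcmE (d x) (d y)) 1 : MvPolynomial σ K) • taylorRel K m d x y := by
  have hLD : lcmE (d x) (d y) ≤ D := lcmE_le hx hy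
  funext l
  simp only [Pi.sub_apply, Pi.smul_apply, smul_eq_mul, Fv]
  by_cases hly : l = y
  · subst hly
    rw [if_pos rfl, if_neg (fun h : l = x => hxy (by rw [h]))]
    rw [sub_zero, rel_apply_right, mono_mul, tsub_eq_lcmE_tsub (d x) (d l),
      tsub_add_tsub (le_lcmE_right (d x) (d l)) hLD]
  · by_cases hlx : l = x
    · subst hlx
      rw [if_neg hly, if_pos rfl, rel_apply_left d hxy, mul_neg, mono_mul]
      rw [tsub_eq_lcmE_tsub (d y) (d l), lcmE_comm (d y) (d l),
        tsub_add_tsub (le_lcmE_left (d l) (d y)) hLD]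
      rw [zero_sub]
    · rw [if_neg hly, if_neg hlx, rel_apply_other d hlx hly, mul_zero, sub_zero]

lemma support_le {G : SimpleGraph (Fin (m + 1))} {D : σ →₀ ℕ} {x jj : Fin (m + 1)}
    (w : G.Walk x jj) (hx : d x ≤ D)
    (hE : ∀ a b, s(a, b) ∈ w.edges → lcmE (d a) (d b) ≤ D) :
    ∀ z ∈ w.support, d z ≤ D := by
  induction w with
  | nil =>
    intro z hz
    rw [SimpleGraph.Walk.support_nil, List.mem_singleton] at hz
    rw [hz]; exact hx
  | cons hadj w' ih =>
    rename_i u y jj'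
    intro z hz
    rw [SimpleGraph.Walk.support_cons] at hz
    have hy : d y ≤ D := by
      have := hE u y (by rw [SimpleGraph.Walk.edges_cons]; exact List.mem_cons_self)
      exact le_trans (le_lcmE_right _ _) this
    rcases List.mem_cons.mp hz with rfl | hz'
    · exact hx
    · exact ih hy (fun a b hab => hE a b (by
        rw [SimpleGraph.Walk.edges_cons]; exact List.mem_cons.mpr (Or.inr hab))) z hz'

lemma tele {D : σ →₀ ℕ} {x jj : Fin (m + 1)} (w : (relGraph t).Walk x jj)
    (hsup : ∀ z ∈ w.support, d z ≤ D) :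
    Fv (K := K) d D jj - Fv (K := K) d D x ∈
      Submodule.span (MvPolynomial σ K)
        (Set.range fun k => taylorRel K m d (t k).1 (t k).2) := by
  induction w with
  | nil => rw [sub_self]; exact Submodule.zero_mem _
  | cons hadj w' ih =>
    rename_i u y jj'
    have hu : d u ≤ D := hsup u (SimpleGraph.Walk.start_mem_support _)
    have hy : d y ≤ D := by
      apply hsup y
      rw [SimpleGraph.Walk.support_cons]
      exact List.mem_cons.mpr (Or.inr (SimpleGraph.Walk.start_mem_support _))
    have hsup' : ∀ z ∈ w'.support, d z ≤ D := fun z hz => hsup z (by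
      rw [SimpleGraph.Walk.support_cons]; exact List.mem_cons.mpr (Or.inr hz))
    have hrel : taylorRel K m d u y ∈
        Submodule.span (MvPolynomial σ K)
          (Set.range fun k => taylorRel K m d (t k).1 (t k).2) := by
      rcases relGraph_adj.mp hadj with ⟨hne, ⟨k, hk⟩ | ⟨k, hk⟩⟩
      · have : taylorRel K m d u y = taylorRel K m d (t k).1 (t k).2 := by rw [hk]
        rw [this]
        exact Submodule.subset_span ⟨k, rfl⟩
      · have h2 : taylorRel K m d y u = -taylorRel K m d u y := rel_neg d hne
        have : taylorRel K m d u y = -taylorRel K m d (t k).1 (t k).2 := by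
          rw [hk, h2, neg_neg]
        rw [this]
        exact Submodule.neg_mem _ (Submodule.subset_span ⟨k, rfl⟩)
    have hstep := step_eq (d := d) (K := K) hadj.ne hu hy
    have : Fv (K := K) d D jj' - Fv (K := K) d D u
        = (Fv (K := K) d D jj' - Fv (K := K) d D y)
          + (Fv (K := K) d D y - Fv (K := K) d D u) := by abel
    rw [this, hstep]
    exact Submodule.add_mem _ (ih hsup') (Submodule.smul_mem _ _ hrel)

lemma rel_eq_Fv {i j : Fin (m + 1)} (hij : i ≠ j) :
    taylorRel K m d i j
      = Fv (K := K) d (lcmE (d i) (d j)) j - Fv (K := K) d (lcmE (d i) (d j)) i := by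
  funext l
  simp only [Pi.sub_apply, Fv]
  by_cases hlj : l = j
  · subst hlj
    rw [if_pos rfl, if_neg (fun h : l = i => hij (by rw [← h]))]
    rw [rel_apply_right, sub_zero, ← tsub_eq_lcmE_tsub]
  · by_cases hli : l = i
    · subst hli
      rw [if_neg hlj, if_pos rfl, rel_apply_left d hij, zero_sub,
        lcmE_comm (d l) (d j), ← tsub_eq_lcmE_tsub]
    · rw [if_neg hlj, if_neg hli, rel_apply_other d hli hlj, sub_zero]

open scoped Classical in
theorem good_hb (hG : Good d t) : IsHB K m d t := by
  classical
  refine ⟨hG.1, ?_⟩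
  apply le_antisymm
  · rw [Submodule.span_le]
    rintro w ⟨k, rfl⟩
    rw [SetLike.mem_coe, LinearMap.mem_ker]
    exact phi_rel d (hG.1 k)
  · rw [ker_phi_eq_span, Submodule.span_le]
    rintro w ⟨i, j, hij, rfl⟩
    rw [SetLike.mem_coe]
    obtain ⟨w0⟩ := hG.2.1.isConnected i j
    set p : (relGraph t).Walk i j := w0.toPath.1 with hp
    have hpath : p.IsPath := w0.toPath.2
    set D := lcmE (d i) (d j) with hD
    have hcov : ∀ a b, s(a, b) ∈ p.edges → lcmE (d a) (d b) ≤ D := by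
      intro a b hab
      have hedge : s(a, b) ∈ (relGraph t).edgeSet := p.edges_subset_edgeSet hab
      have : s(a, b) ∈ Finset.image (rowE t) Finset.univ := by
        rw [← edgeFinset_relGraph hG.1, SimpleGraph.mem_edgeFinset]
        exact hedge
      obtain ⟨k, -, hk⟩ := Finset.mem_image.mp this
      have hsep : ¬(cutG t k).Reachable i j := by
        rw [cutG, hk]
        exact sep_of_path_edge hG.2.1.IsAcyclic p hpath hab
      have hcov0 := hG.2.2 k i j hsep
      rcases Sym2.eq_iff.mp hk with ⟨h1, h2⟩ | ⟨h1, h2⟩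
      · rwa [h1, h2] at hcov0
      · rw [h1, h2] at hcov0
        rwa [lcmE_comm (d b) (d a)] at hcov0
    have hsup : ∀ z ∈ p.support, d z ≤ D := support_le p (le_lcmE_left _ _) hcov
    rw [rel_eq_Fv hij]
    exact tele p hsup


/-! ### The exchange lemma -/

lemma rowE_def (t : Fin m → Fin (m + 1) × Fin (m + 1)) (k : Fin m) :
    rowE t k = s((t k).1, (t k).2) := rfl

lemma adj_of_sym2_eq {V : Type*} {G : SimpleGraph V} {x y u v : V}
    (h : s(x, y) = s(u, v)) (hadj : G.Adj u v) : G.Adj x y := by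
  rcases Sym2.eq_iff.mp h with ⟨rfl, rfl⟩ | ⟨rfl, rfl⟩
  · exact hadj
  · exact hadj.symm

def G2 (t : Fin m → Fin (m + 1) × Fin (m + 1)) (k₀ k : Fin m) : SimpleGraph (Fin (m + 1)) :=
  (relGraph t).deleteEdges {rowE t k₀, rowE t k}

section Exchange

open SimpleGraph

variable {d : Fin (m + 1) → (σ →₀ ℕ)} {t : Fin m → Fin (m + 1) × Fin (m + 1)}
variable {k₀ : Fin m} {i j : Fin (m + 1)}

lemma update_rowE_same : rowE (Function.update t k₀ (i, j)) k₀ = s(i, j) := by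
  rw [rowE_def, Function.update_self]

lemma update_rowE_ne {k : Fin m} (hk : k ≠ k₀) :
    rowE (Function.update t k₀ (i, j)) k = rowE t k := by
  rw [rowE_def, Function.update_of_ne hk, rowE_def]

lemma row_ne_newedge (hnadj : ¬(relGraph t).Adj i j) (hne : ∀ k, (t k).1 ≠ (t k).2)
    (k : Fin m) : rowE t k ≠ s(i, j) := by
  intro h
  exact hnadj (adj_of_sym2_eq h.symm (row_adj hne k))

lemma adjA1 (hne : ∀ k, (t k).1 ≠ (t k).2) (hinj : Function.Injective (rowE t))
    (hij : i ≠ j) (x y : Fin (m + 1)) :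
    (relGraph (Function.update t k₀ (i, j))).Adj x y ↔
      ((relGraph t).Adj x y ∧ s(x, y) ≠ rowE t k₀) ∨ (s(x, y) = s(i, j) ∧ x ≠ y) := by
  constructor
  · intro hadj
    rcases relGraph_adj.mp hadj with ⟨hxy, ⟨k, hk⟩ | ⟨k, hk⟩⟩
    · by_cases hkk : k = k₀
      · subst hkk
        rw [Function.update_self] at hk
        injection hk with h1 h2
        exact Or.inr ⟨by rw [← h1, ← h2], hxy⟩
      · rw [Function.update_of_ne hkk] at hk
        refine Or.inl ⟨relGraph_adj.mpr ⟨hxy, Or.inl ⟨k, hk⟩⟩, ?_⟩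
        intro hcon
        apply hkk
        apply hinj
        rw [rowE_def, hk, ← hcon]
    · by_cases hkk : k = k₀
      · subst hkk
        rw [Function.update_self] at hk
        injection hk with h1 h2
        refine Or.inr ⟨?_, hxy⟩
        rw [← h1, ← h2]
        exact Sym2.eq_swap
      · rw [Function.update_of_ne hkk] at hk
        refine Or.inl ⟨relGraph_adj.mpr ⟨hxy, Or.inr ⟨k, hk⟩⟩, ?_⟩
        intro hcon
        apply hkk
        apply hinj
        rw [rowE_def, hk, ← hcon]
        exact Sym2.eq_swap
  · rintro (⟨hadj, hnek⟩ | ⟨hs, hxy⟩)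
    · rcases relGraph_adj.mp hadj with ⟨hxy, ⟨k, hk⟩ | ⟨k, hk⟩⟩
      · have hkk : k ≠ k₀ := by
          intro hcon; subst hcon
          exact hnek (by rw [rowE_def, hk])
        exact relGraph_adj.mpr ⟨hxy, Or.inl ⟨k, by rw [Function.update_of_ne hkk, hk]⟩⟩
      · have hkk : k ≠ k₀ := by
          intro hcon; subst hcon
          exact hnek (by rw [rowE_def, hk]; exact Sym2.eq_swap)
        exact relGraph_adj.mpr ⟨hxy, Or.inr ⟨k, by rw [Function.update_of_ne hkk, hk]⟩⟩
    · rcases Sym2.eq_iff.mp hs with ⟨rfl, rfl⟩ | ⟨rfl, rfl⟩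
      · exact relGraph_adj.mpr ⟨hxy, Or.inl ⟨k₀, Function.update_self _ _ _⟩⟩
      · exact relGraph_adj.mpr ⟨hxy, Or.inr ⟨k₀, Function.update_self _ _ _⟩⟩

lemma idE1 (hne : ∀ k, (t k).1 ≠ (t k).2) (hinj : Function.Injective (rowE t))
    (hij : i ≠ j) (hnadj : ¬(relGraph t).Adj i j) :
    cutG (Function.update t k₀ (i, j)) k₀ = cutG t k₀ := by
  ext x y
  rw [cutG, cutG, SimpleGraph.deleteEdges_adj, SimpleGraph.deleteEdges_adj,
    update_rowE_same, Set.mem_singleton_iff, Set.mem_singleton_iff,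
    adjA1 hne hinj hij]
  constructor
  · rintro ⟨⟨hadj, hnek⟩ | ⟨hs, _⟩, hne'⟩
    · exact ⟨hadj, hnek⟩
    · exact absurd hs hne'
  · rintro ⟨hadj, hnek⟩
    refine ⟨Or.inl ⟨hadj, hnek⟩, ?_⟩
    intro hcon
    exact hnadj (adj_of_sym2_eq hcon.symm hadj)

lemma idE4 (hne : ∀ k, (t k).1 ≠ (t k).2) (hinj : Function.Injective (rowE t))
    (hij : i ≠ j) :
    relGraph (Function.update t k₀ (i, j)) = cutG t k₀ ⊔ GE i j := by
  ext x y
  rw [SimpleGraph.sup_adj, cutG, SimpleGraph.deleteEdges_adj, Set.mem_singleton_iff,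
    GE_adj, adjA1 hne hinj hij]

lemma idI1 {k : Fin m} (hne : ∀ k, (t k).1 ≠ (t k).2)
    (hinj : Function.Injective (rowE t)) (hk : k ≠ k₀) :
    cutG t k₀ = G2 t k₀ k ⊔ GE (t k).1 (t k).2 := by
  ext x y
  rw [SimpleGraph.sup_adj, cutG, G2, SimpleGraph.deleteEdges_adj,
    SimpleGraph.deleteEdges_adj, Set.mem_singleton_iff, Set.mem_insert_iff,
    Set.mem_singleton_iff, GE_adj]
  constructor
  · rintro ⟨hadj, hne0⟩
    by_cases hsk : s(x, y) = rowE t k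
    · exact Or.inr ⟨hsk, hadj.ne⟩
    · exact Or.inl ⟨hadj, by tauto⟩
  · rintro (⟨hadj, hne0⟩ | ⟨hs, hxy⟩)
    · exact ⟨hadj, by tauto⟩
    · refine ⟨adj_of_sym2_eq hs (row_adj hne k), ?_⟩
      rw [hs]
      intro hcon
      exact hk (hinj hcon)

lemma idI2 {k : Fin m} (hne : ∀ k, (t k).1 ≠ (t k).2)
    (hinj : Function.Injective (rowE t)) (hk : k ≠ k₀) :
    cutG t k = G2 t k₀ k ⊔ GE (t k₀).1 (t k₀).2 := by
  ext x y
  rw [SimpleGraph.sup_adj, cutG, G2, SimpleGraph.deleteEdges_adj,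
    SimpleGraph.deleteEdges_adj, Set.mem_singleton_iff, Set.mem_insert_iff,
    Set.mem_singleton_iff, GE_adj]
  constructor
  · rintro ⟨hadj, hnek⟩
    by_cases hs0 : s(x, y) = rowE t k₀
    · exact Or.inr ⟨hs0, hadj.ne⟩
    · exact Or.inl ⟨hadj, by tauto⟩
  · rintro (⟨hadj, hne0⟩ | ⟨hs, hxy⟩)
    · exact ⟨hadj, by tauto⟩
    · refine ⟨adj_of_sym2_eq hs (row_adj hne k₀), ?_⟩
      rw [hs]
      intro hcon
      exact hk (hinj hcon.symm)

lemma idI3 {k : Fin m} (hne : ∀ k, (t k).1 ≠ (t k).2)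
    (hinj : Function.Injective (rowE t)) (hij : i ≠ j)
    (hnadj : ¬(relGraph t).Adj i j) (hk : k ≠ k₀) :
    cutG (Function.update t k₀ (i, j)) k = G2 t k₀ k ⊔ GE i j := by
  ext x y
  rw [SimpleGraph.sup_adj, cutG, G2, SimpleGraph.deleteEdges_adj,
    SimpleGraph.deleteEdges_adj, update_rowE_ne hk, Set.mem_singleton_iff,
    Set.mem_insert_iff, Set.mem_singleton_iff, GE_adj, adjA1 hne hinj hij]
  constructor
  · rintro ⟨⟨hadj, hne0⟩ | ⟨hs, hxy⟩, hnek⟩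
    · exact Or.inl ⟨hadj, by tauto⟩
    · exact Or.inr ⟨hs, hxy⟩
  · rintro (⟨hadj, hne0⟩ | ⟨hs, hxy⟩)
    · exact ⟨Or.inl ⟨hadj, by tauto⟩, by tauto⟩
    · refine ⟨Or.inr ⟨hs, hxy⟩, ?_⟩
      rw [hs]
      exact fun hcon => row_ne_newedge hnadj hne k hcon.symm

lemma idI0 {k : Fin m} : G2 t k₀ k ≤ cutG t k₀ := by
  intro x y hxy
  rw [G2, SimpleGraph.deleteEdges_adj] at hxy
  rw [cutG, SimpleGraph.deleteEdges_adj]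
  simp only [Set.mem_insert_iff, Set.mem_singleton_iff] at hxy
  exact ⟨hxy.1, by simp; tauto⟩

lemma idI0' {k : Fin m} : G2 t k₀ k ≤ cutG t k := by
  intro x y hxy
  rw [G2, SimpleGraph.deleteEdges_adj] at hxy
  rw [cutG, SimpleGraph.deleteEdges_adj]
  simp only [Set.mem_insert_iff, Set.mem_singleton_iff] at hxy
  exact ⟨hxy.1, by simp; tauto⟩


lemma exchange_core (hG : Good d t) {k : Fin m} (hk : k ≠ k₀) {p q : Fin (m + 1)}
    (hij : i ≠ j) (hnadj : ¬(relGraph t).Adj i j)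
    (hsep : ¬(cutG t k₀).Reachable i j)
    (hora : (cutG t k₀).Reachable (t k₀).1 i)
    (horb : (cutG t k₀).Reachable (t k₀).2 j)
    (hL : lcmE (d i) (d j) = lcmE (d (t k₀).1) (d (t k₀).2))
    (hpa : (G2 t k₀ k).Reachable p (t k₀).1)
    (hbq : (G2 t k₀ k).Reachable (t k₀).2 q)
    (hpq' : ¬(G2 t k₀ k ⊔ GE i j).Reachable p q) :
    lcmE (d (t k).1) (d (t k).2) ≤ lcmE (d p) (d q) := by
  classical
  have hne := hG.1
  have hinj := good_inj hG.1 hG.2.1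
  have hac := hG.2.1.IsAcyclic
  have hbr_e : ¬(cutG t k₀).Reachable (t k₀).1 (t k₀).2 :=
    bridge_of_acyclic hac (row_adj hne k₀)
  have hbr_h : ¬(cutG t k).Reachable (t k).1 (t k).2 :=
    bridge_of_acyclic hac (row_adj hne k)
  -- F1 : p and q are separated by the cut at k₀
  have hF1 : ¬(cutG t k₀).Reachable p q := by
    intro h
    exact hbr_e (((hpa.mono idI0).symm.trans h).trans (hbq.mono idI0).symm)
  have hcov_e := hG.2.2 k₀ p q hF1
  have hdi : d i ≤ lcmE (d p) (d q) :=
    le_trans (le_trans (le_lcmE_left _ _) (le_of_eq hL)) hcov_e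
  have hdj : d j ≤ lcmE (d p) (d q) :=
    le_trans (le_trans (le_lcmE_right _ _) (le_of_eq hL)) hcov_e
  -- trichotomy for i
  have hora' := hora
  rw [idI1 hne hinj hk] at hora'
  have horb' := horb
  rw [idI1 hne hinj hk] at horb'
  -- helper to conclude from a covering of the pair (i, p)
  have conclude_ip : lcmE (d (t k).1) (d (t k).2) ≤ lcmE (d i) (d p) →
      lcmE (d (t k).1) (d (t k).2) ≤ lcmE (d p) (d q) := by
    intro hc
    rw [finsupp_le_iff]
    intro s
    have h1 := finsupp_le_iff.mp hc s
    have h2 := finsupp_le_iff.mp hdi s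
    rw [lcmE_apply, lcmE_apply] at h1
    rw [lcmE_apply] at h2
    rw [lcmE_apply, lcmE_apply]
    omega
  have conclude_jq : lcmE (d (t k).1) (d (t k).2) ≤ lcmE (d j) (d q) →
      lcmE (d (t k).1) (d (t k).2) ≤ lcmE (d p) (d q) := by
    intro hc
    rw [finsupp_le_iff]
    intro s
    have h1 := finsupp_le_iff.mp hc s
    have h2 := finsupp_le_iff.mp hdj s
    rw [lcmE_apply, lcmE_apply] at h1
    rw [lcmE_apply] at h2
    rw [lcmE_apply, lcmE_apply]
    omega
  rcases reach_decomp hora' with hiA | ⟨h1, h2⟩ | ⟨h1, h2⟩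
  · -- i is G2-reachable from a; now trichotomy for j
    rcases reach_decomp horb' with hjA | ⟨g1, g2⟩ | ⟨g1, g2⟩
    · -- contradiction : p and q are joined through the new edge
      exfalso
      apply hpq'
      have e1 : (G2 t k₀ k ⊔ GE i j).Reachable p i :=
        (hpa.trans hiA).mono le_sup_left
      have e2 : (G2 t k₀ k ⊔ GE i j).Reachable j q :=
        ((hjA.symm.trans hbq)).mono le_sup_left
      have eij : (G2 t k₀ k ⊔ GE i j).Reachable i j :=
        (SimpleGraph.Adj.reachable (by
          rw [SimpleGraph.sup_adj, GE_adj]; exact Or.inr ⟨rfl, hij⟩))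
      exact (e1.trans eij).trans e2
    · -- j : b ~ x₁, x₂ ~ j
      apply conclude_jq
      apply hG.2.2 k j q
      intro hR
      rw [idI2 hne hinj hk] at hR
      rcases reach_decomp hR with hr | ⟨hr1, hr2⟩ | ⟨hr1, hr2⟩
      · -- G2.R j q : then x₂ ~ j ~ b ~ x₁ contradicts the bridge at k
        apply hbr_h
        exact ((((g2.trans hr).trans hbq.symm).trans g1).symm).mono idI0'
      · -- G2.R j a : then j ~ a ~ i in cutG t k₀ contradicts hsep
        exact hsep ((hr1.mono idI0).trans hora).symm
      · -- G2.R j b : as in the first case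
        apply hbr_h
        exact (((g2.trans hr1).trans g1).symm).mono idI0'
    · -- j : b ~ x₂, x₂... g1 : G2.R b x₂, g2 : G2.R x₁ j
      apply conclude_jq
      apply hG.2.2 k j q
      intro hR
      rw [idI2 hne hinj hk] at hR
      rcases reach_decomp hR with hr | ⟨hr1, hr2⟩ | ⟨hr1, hr2⟩
      · apply hbr_h
        exact (((g2.trans hr).trans hbq.symm).trans g1).mono idI0'
      · exact hsep ((hr1.mono idI0).trans hora).symm
      · apply hbr_h
        exact ((g2.trans hr1).trans g1).mono idI0'
  · -- i : a ~ x₁ (h1), x₂ ~ i (h2)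
    apply conclude_ip
    apply hG.2.2 k i p
    intro hR
    rw [idI2 hne hinj hk] at hR
    rcases reach_decomp hR with hr | ⟨hr1, hr2⟩ | ⟨hr1, hr2⟩
    · -- G2.R i p : x₂ ~ i ~ a ~ x₁ contradicts bridge at k
      apply hbr_h
      exact ((((h2.trans hr).trans hpa).trans h1).symm).mono idI0'
    · apply hbr_h
      exact (((h2.trans hr1).trans h1).symm).mono idI0'
    · -- G2.R i b : i ~ b ~ j in cutG t k₀ contradicts hsep
      exact hsep ((hr1.mono idI0).trans horb)
  · -- i : a ~ x₂ (h1), x₁ ~ i (h2)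
    apply conclude_ip
    apply hG.2.2 k i p
    intro hR
    rw [idI2 hne hinj hk] at hR
    rcases reach_decomp hR with hr | ⟨hr1, hr2⟩ | ⟨hr1, hr2⟩
    · apply hbr_h
      exact (((h2.trans hr).trans hpa).trans h1).mono idI0'
    · apply hbr_h
      exact ((h2.trans hr1).trans h1).mono idI0'
    · exact hsep ((hr1.mono idI0).trans horb)

open scoped Classical in
lemma exchange (hG : Good d t) (k₀ : Fin m) (hij : i ≠ j)
    (hnadj : ¬(relGraph t).Adj i j)
    (hsep : ¬(cutG t k₀).Reachable i j)
    (hora : (cutG t k₀).Reachable (t k₀).1 i)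
    (horb : (cutG t k₀).Reachable (t k₀).2 j)
    (hL : lcmE (d i) (d j) = lcmE (d (t k₀).1) (d (t k₀).2)) :
    Good d (Function.update t k₀ (i, j)) := by
  classical
  have hne := hG.1
  have hinj := good_inj hG.1 hG.2.1
  have hne' : ∀ k, ((Function.update t k₀ (i, j)) k).1 ≠ ((Function.update t k₀ (i, j)) k).2 := by
    intro k
    by_cases hkk : k = k₀
    · subst hkk; rw [Function.update_self]; exact hij
    · rw [Function.update_of_ne hkk]; exact hne k
  -- connectivity of the new graph
  have hTadj : (relGraph t).Adj (t k₀).1 (t k₀).2 := row_adj hne k₀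
  have hconn' : (relGraph (Function.update t k₀ (i, j))).Connected := by
    rw [SimpleGraph.connected_iff]
    refine ⟨?_, ⟨0⟩⟩
    intro x y
    have hxy : (relGraph t).Reachable x y := hG.2.1.isConnected x y
    rw [idE4 hne hinj hij]
    have heij : (cutG t k₀ ⊔ GE i j).Reachable i j :=
      SimpleGraph.Adj.reachable (by rw [SimpleGraph.sup_adj, GE_adj]; exact Or.inr ⟨rfl, hij⟩)
    have hcd := decomp_del hTadj hxy
    rcases hcd with hr | ⟨hr1, hr2⟩ | ⟨hr1, hr2⟩
    · exact hr.mono le_sup_left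
    · -- x ~ a, b ~ y in cutG t k₀
      refine ((hr1.trans hora).mono le_sup_left).trans (heij.trans ?_)
      exact ((horb.symm.trans hr2).mono le_sup_left)
    · refine ((hr1.trans horb).mono le_sup_left).trans (heij.symm.trans ?_)
      exact ((hora.symm.trans hr2).mono le_sup_left)
  -- tree
  have hinj' : Function.Injective (rowE (Function.update t k₀ (i, j))) := by
    intro k k' hkk'
    by_cases h1 : k = k₀ <;> by_cases h2 : k' = k₀
    · rw [h1, h2]
    · exfalso
      rw [h1, update_rowE_same, update_rowE_ne h2] at hkk'
      exact row_ne_newedge hnadj hne k' hkk'.symm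
    · exfalso
      rw [h2, update_rowE_same, update_rowE_ne h1] at hkk'
      exact row_ne_newedge hnadj hne k hkk'
    · rw [update_rowE_ne h1, update_rowE_ne h2] at hkk'
      exact hinj hkk'
  have htree' : (relGraph (Function.update t k₀ (i, j))).IsTree := by
    apply tree_of_connected_edges_le hconn'
    have hcard : (relGraph (Function.update t k₀ (i, j))).edgeFinset.card = m := by
      rw [edgeFinset_relGraph hne', Finset.card_image_of_injective _ hinj']
      simp
    simp only [Fintype.card_fin]
    omega
  refine ⟨hne', htree', ?_⟩
  intro k p q hpq
  by_cases hkk : k = k₀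
  · subst hkk
    rw [idE1 hne hinj hij hnadj] at hpq
    have := hG.2.2 k p q hpq
    rw [Function.update_self]
    exact le_trans (le_of_eq hL) this
  · rw [idI3 hne hinj hij hnadj hkk] at hpq
    rw [Function.update_of_ne hkk]
    by_cases hPQ : (cutG t k).Reachable p q
    · rw [idI2 hne hinj hkk] at hPQ
      rcases reach_decomp hPQ with hr | ⟨hr1, hr2⟩ | ⟨hr1, hr2⟩
      · exact absurd (hr.mono le_sup_left) hpq
      · exact exchange_core hG hkk hij hnadj hsep hora horb hL hr1 hr2 hpq
      · have := exchange_core hG hkk hij hnadj hsep hora horb hL hr2.symm hr1.symm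
          (fun h => hpq h.symm)
        rw [lcmE_comm (d q) (d p)] at this
        exact this
    · exact hG.2.2 k p q hPQ

end Exchange

/-! ### Assembly -/

lemma exists_adj_of_reachable {V : Type*} {G : SimpleGraph V} {x y : V}
    (h : G.Reachable x y) (hne : x ≠ y) : ∃ a b, G.Adj a b := by
  obtain ⟨w⟩ := h
  cases w with
  | nil => exact absurd rfl hne
  | cons h _ => exact ⟨_, _, h⟩

lemma lin_edge (hlin : HasLinearRes K m d) {i j : Fin (m + 1)}
    (h : (taylorGraph K m d).Adj i j) :
    mdeg (d i - d j) = 1 ∧ mdeg (d j - d i) = 1 := by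
  rw [taylorGraph, SimpleGraph.sSup_adj] at h
  obtain ⟨Γ', hΓ', hadj⟩ := h
  obtain ⟨t'', hHB'', rfl⟩ := hΓ'
  rcases relGraph_adj.mp hadj with ⟨hne, ⟨k, hk⟩ | ⟨k, hk⟩⟩
  · have h2 := hlin.2 t'' hHB'' k
    rw [hk] at h2
    exact h2
  · have h2 := hlin.2 t'' hHB'' k
    rw [hk] at h2
    exact ⟨h2.2, h2.1⟩

lemma mdeg_lcmE (a b : σ →₀ ℕ) : mdeg (lcmE a b) = mdeg (a - b) + mdeg b := mdeg_add _ _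

open scoped Classical in
theorem main_aux (d : Fin (m + 1) → (σ →₀ ℕ)) (hlin : HasLinearRes K m d) :
    relTrees K m d = {Γ : SimpleGraph (Fin (m + 1)) |
      Γ ≤ taylorGraph K m d ∧ Γ.IsTree} := by
  classical
  ext Γ
  simp only [Set.mem_setOf_eq]
  constructor
  · rintro ⟨t, hHB, rfl⟩
    exact ⟨le_sSup ⟨t, hHB, rfl⟩, hb_tree hHB⟩
  · rintro ⟨hle, htree⟩
    by_cases hm : m = 0
    · -- the trivial case of a single generator
      subst hm
      refine ⟨Fin.elim0, ⟨fun k => Fin.elim0 k, ?_⟩, ?_⟩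
      · rw [Set.range_eq_empty, Submodule.span_empty]
        symm
        rw [LinearMap.ker_eq_bot']
        intro v hv
        rw [phi_apply] at hv
        rw [show (∑ i : Fin (0 + 1), v i * monomial (d i) 1) = v 0 * monomial (d 0) 1 from
          Fin.sum_univ_one _] at hv
        rcases mul_eq_zero.mp hv with h | h
        · funext l
          rw [Fin.eq_zero l]
          exact h
        · exact absurd h (mono_ne_zero _)
      · ext x y
        constructor
        · intro h
          rcases relGraph_adj.mp h with ⟨_, ⟨k, _⟩ | ⟨k, _⟩⟩ <;> exact Fin.elim0 k
        · intro h
          have hxy : x = y := by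
            apply Fin.ext
            have hx := x.isLt
            have hy := y.isLt
            omega
          exact (h.ne hxy).elim
    · -- m ≥ 1 : there is at least one relation tree
      have hm1 : 1 ≤ m := Nat.one_le_iff_ne_zero.mpr hm
      have hne01 : (⟨0, by omega⟩ : Fin (m + 1)) ≠ ⟨1, by omega⟩ := by
        simp [Fin.ext_iff]
      obtain ⟨a0, b0, hab0⟩ := exists_adj_of_reachable
        (htree.isConnected ⟨0, by omega⟩ ⟨1, by omega⟩) hne01
      have htay := hle hab0
      rw [taylorGraph, SimpleGraph.sSup_adj] at htay
      obtain ⟨Γ₀, ⟨t₀, hHB₀, hΓ₀⟩, -⟩ := htay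
      -- the degree of every edge lcm in the Taylor graph
      obtain ⟨c, hc⟩ := hlin.1
      -- main exchange induction
      have key : ∀ N : ℕ, ∀ t : Fin m → Fin (m + 1) × Fin (m + 1), Good d t →
          (Γ.edgeFinset \ (relGraph t).edgeFinset).card ≤ N → Γ ∈ relTrees K m d := by
        intro N
        induction N with
        | zero =>
          intro t hG hcard
          have hsub : Γ.edgeFinset ⊆ (relGraph t).edgeFinset := by
            intro e he
            by_contra hcon
            have : e ∈ Γ.edgeFinset \ (relGraph t).edgeFinset := Finset.mem_sdiff.mpr ⟨he, hcon⟩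
            rw [Finset.card_eq_zero.mp (Nat.le_zero.mp hcard)] at this
            exact absurd this (Finset.notMem_empty e)
          have hceq : (relGraph t).edgeFinset.card ≤ Γ.edgeFinset.card := by
            have h1 := htree.card_edgeFinset
            have h2 := hG.2.1.card_edgeFinset
            omega
          have := Finset.eq_of_subset_of_card_le hsub hceq
          exact ⟨t, good_hb hG, SimpleGraph.edgeFinset_inj.mp this.symm⟩
        | succ N ih =>
          intro t hG hcard
          by_cases h0 : (Γ.edgeFinset \ (relGraph t).edgeFinset).card = 0
          · exact ih t hG (by omega)
          obtain ⟨e', he'⟩ := Finset.card_pos.mp (by omega : 0 < (Γ.edgeFinset \ (relGraph t).edgeFinset).card)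
          induction e' using Sym2.ind with
          | _ i j =>
          rw [Finset.mem_sdiff] at he'
          have hΓadj : Γ.Adj i j := by
            have := he'.1
            rw [SimpleGraph.mem_edgeFinset, SimpleGraph.mem_edgeSet] at this
            exact this
          have hij : i ≠ j := hΓadj.ne
          have hnadjT : ¬(relGraph t).Adj i j := by
            intro hcon
            exact he'.2 (by rw [SimpleGraph.mem_edgeFinset, SimpleGraph.mem_edgeSet]; exact hcon)
          -- path in the tree relGraph t from i to j
          obtain ⟨w0⟩ := hG.2.1.isConnected i j
          set p : (relGraph t).Walk i j := w0.toPath.1 with hp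
          have hpath : p.IsPath := w0.toPath.2
          -- find an edge of p not in Γ
          have hex : ∃ e ∈ p.edges, e ∉ Γ.edgeSet := by
            by_contra hcon
            push_neg at hcon
            have hp' : (p.transfer Γ hcon).IsPath := hpath.transfer _
            have hcyc : (SimpleGraph.Walk.cons hΓadj.symm (p.transfer Γ hcon)).IsCycle := by
              rw [SimpleGraph.Walk.cons_isCycle_iff]
              refine ⟨hp', ?_⟩
              rw [SimpleGraph.Walk.edges_transfer]
              intro hmem
              have := p.edges_subset_edgeSet hmem
              rw [SimpleGraph.mem_edgeSet] at this
              exact hnadjT this.symm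
            exact htree.IsAcyclic _ hcyc
          obtain ⟨e, hep, heΓ⟩ := hex
          induction e using Sym2.ind with
          | _ ex ey =>
          have heT : s(ex, ey) ∈ (relGraph t).edgeSet := p.edges_subset_edgeSet hep
          have : s(ex, ey) ∈ Finset.image (rowE t) Finset.univ := by
            rw [← edgeFinset_relGraph hG.1, SimpleGraph.mem_edgeFinset]
            exact heT
          obtain ⟨k₀, -, hk₀⟩ := Finset.mem_image.mp this
          have hsep : ¬(cutG t k₀).Reachable i j := by
            rw [cutG, hk₀]
            exact sep_of_path_edge hG.2.1.IsAcyclic p hpath hep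
          -- the key lcm equality
          have hrowlin := hlin.2 t (good_hb hG) k₀
          have hedgelin := lin_edge hlin (hle hΓadj)
          have hdeg : mdeg (lcmE (d i) (d j)) = mdeg (lcmE (d (t k₀).1) (d (t k₀).2)) := by
            rw [mdeg_lcmE, mdeg_lcmE, hrowlin.1, hedgelin.1, hc j, hc (t k₀).2]
          have hle0 := hG.2.2 k₀ i j hsep
          have hL : lcmE (d i) (d j) = lcmE (d (t k₀).1) (d (t k₀).2) :=
            (eq_of_le_of_mdeg_le hle0 (le_of_eq hdeg)).symm
          -- orientation
          have hTadj := row_adj hG.1 k₀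
          have hia : (cutG t k₀).Reachable i (t k₀).1 ∨ (cutG t k₀).Reachable i (t k₀).2 :=
            reach_endpoint hTadj (hG.2.1.isConnected i (t k₀).1)
          have hja : (cutG t k₀).Reachable j (t k₀).1 ∨ (cutG t k₀).Reachable j (t k₀).2 :=
            reach_endpoint hTadj (hG.2.1.isConnected j (t k₀).1)
          -- build the new Good system
          have hstep : ∃ t' : Fin m → Fin (m + 1) × Fin (m + 1), Good d t' ∧
              relGraph t' = relGraph (Function.update t k₀ (i, j)) ∧
              (∀ k, k ≠ k₀ → t' k = t k) ∧ (t' k₀ = (i, j) ∨ t' k₀ = (j, i)) := by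
            rcases hia with h1 | h1 <;> rcases hja with h2 | h2
            · exact absurd (h1.trans h2.symm) hsep
            · refine ⟨Function.update t k₀ (i, j),
                exchange hG k₀ hij hnadjT hsep h1.symm h2.symm hL, rfl,
                fun k hk => Function.update_of_ne hk _ _, Or.inl (Function.update_self _ _ _)⟩
            · refine ⟨Function.update t k₀ (j, i),
                exchange hG k₀ hij.symm (fun h => hnadjT h.symm)
                  (fun h => hsep h.symm) h2.symm h1.symm
                  (by rw [lcmE_comm (d j) (d i)]; exact hL), ?_, 
                fun k hk => Function.update_of_ne hk _ _, Or.inr (Function.update_self _ _ _)⟩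
              · ext x y
                rw [adjA1 hG.1 (good_inj hG.1 hG.2.1) hij.symm,
                  adjA1 hG.1 (good_inj hG.1 hG.2.1) hij]
                rw [show s(j, i) = s(i, j) from Sym2.eq_swap]
            · exact absurd (h1.trans h2.symm) hsep
          obtain ⟨t', hG', hgr, hother, hk0'⟩ := hstep
          -- cardinality decrease
          apply ih t' hG'
          have hsubset : Γ.edgeFinset \ (relGraph t').edgeFinset ⊆
              (Γ.edgeFinset \ (relGraph t).edgeFinset).erase s(i, j) := by
            intro x hx
            rw [Finset.mem_sdiff] at hx
            rw [Finset.mem_erase, Finset.mem_sdiff]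
            have hxne : x ≠ s(i, j) := by
              intro hcon
              apply hx.2
              rw [SimpleGraph.mem_edgeFinset, hcon, SimpleGraph.mem_edgeSet, hgr,
                adjA1 hG.1 (good_inj hG.1 hG.2.1) hij]
              exact Or.inr ⟨rfl, hij⟩
            refine ⟨hxne, hx.1, ?_⟩
            intro hxT
            apply hx.2
            have : x ∈ Finset.image (rowE t) Finset.univ := by
              rw [← edgeFinset_relGraph hG.1]
              exact hxT
            obtain ⟨k, -, hkx⟩ := Finset.mem_image.mp this
            have hkne : k ≠ k₀ := by
              intro hcon
              subst hcon
              rw [hkx] at hk₀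
              rw [← hk₀] at heΓ
              exact heΓ (by
                have := hx.1
                rwa [SimpleGraph.mem_edgeFinset] at this)
            rw [SimpleGraph.mem_edgeFinset, ← hkx,
              show rowE t k = rowE t' k from by rw [rowE_def, rowE_def, hother k hkne],
              rowE_def, SimpleGraph.mem_edgeSet]
            exact row_adj hG'.1 k
          have hcd := Finset.card_le_card hsubset
          have hmem : s(i, j) ∈ Γ.edgeFinset \ (relGraph t).edgeFinset := by
            rw [Finset.mem_sdiff]
            exact ⟨by rw [SimpleGraph.mem_edgeFinset, SimpleGraph.mem_edgeSet]; exact hΓadj,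
              fun hcon => hnadjT (by rwa [SimpleGraph.mem_edgeFinset, SimpleGraph.mem_edgeSet] at hcon)⟩
          rw [Finset.card_erase_of_mem hmem] at hcd
          omega
      exact key _ t₀ (hb_good hHB₀) le_rfl

end Rows

end Aux12

open CMCodim2 MvPolynomial
/-- Let `I ⊂ S` be a Cohen–Macaulay monomial ideal of codimension 2
with a linear resolution. Then `T(I) = T(G(I))`: the set of relation trees of `I` is
exactly the set of spanning trees of the Taylor graph `G(I)`. -/
theorem statement12 (K : Type*) [Field K] {n m : ℕ}
    (d : Fin (m + 1) → (Fin n →₀ ℕ)) (I : Ideal (MvPolynomial (Fin n) K))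
    (hgen : MinGens K m d I) (hcm : IsCMCodim2 I) (hlin : HasLinearRes K m d) :
    relTrees K m d = {Γ : SimpleGraph (Fin (m + 1)) | Γ ≤ taylorGraph K m d ∧ Γ.IsTree} :=
  Aux12.main_aux d hlin
end

section
/- Let I ⊂ S be a Cohen–Macaulay monomial ideal of codimension 2 with a linear resolution, and let G(I) be its Taylor graph. If C is a cycle in G(I), then the restriction of G(I) to the vertex set of C is a complete graph; that is, any two distinct vertices of C are adjacent in G(I). In particular, G(I) is a chordal graph. -/
open MvPolynomial

namespace S14Aux
open CMCodim2 MvPolynomial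

noncomputable section

variable {K : Type*} [Field K] {σ : Type*} {m : ℕ}

/-! ### Arithmetic of exponent vectors -/

lemma mdeg_add (a b : σ →₀ ℕ) : mdeg (a + b) = mdeg a + mdeg b :=
  Finsupp.sum_add_index' (fun _ => rfl) (fun _ _ _ => rfl)

lemma mdeg_eq_zero {a : σ →₀ ℕ} (h : mdeg a = 0) : a = 0 := by
  rw [mdeg, Finsupp.sum] at h
  ext x
  by_cases hx : x ∈ a.support
  · exact (Finset.sum_eq_zero_iff.mp h) x hx
  · simpa using Finsupp.notMem_support_iff.mp hx

lemma eq_of_le_of_mdeg_le {a b : σ →₀ ℕ} (h : a ≤ b) (hd : mdeg b ≤ mdeg a) : a = b := by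
  have h2 : a + (b - a) = b := add_tsub_cancel_of_le h
  have h3 : mdeg a + mdeg (b - a) = mdeg b := by rw [← mdeg_add, h2]
  have h4 : mdeg (b - a) = 0 := by omega
  rw [← h2, mdeg_eq_zero h4, add_zero]

lemma mdeg_mono {a b : σ →₀ ℕ} (h : a ≤ b) : mdeg a ≤ mdeg b := by
  have h2 : a + (b - a) = b := add_tsub_cancel_of_le h
  calc mdeg a ≤ mdeg a + mdeg (b - a) := Nat.le_add_right _ _
  _ = mdeg b := by rw [← mdeg_add, h2]

lemma supE_comm (a b : σ →₀ ℕ) : a - b + b = b - a + a := by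
  ext x; simp only [Finsupp.add_apply, Finsupp.tsub_apply]; omega

lemma le_supE_left (a b : σ →₀ ℕ) : a ≤ a - b + b := by
  rw [Finsupp.le_def]; intro x
  simp only [Finsupp.add_apply, Finsupp.tsub_apply]; omega

lemma le_supE_right (a b : σ →₀ ℕ) : b ≤ a - b + b := by
  rw [Finsupp.le_def]; intro x
  simp only [Finsupp.add_apply, Finsupp.tsub_apply]; omega

lemma supE_sub_right (a b : σ →₀ ℕ) : (a - b + b) - b = a - b := by
  ext x; simp only [Finsupp.add_apply, Finsupp.tsub_apply]; omega

lemma supE_sub_left (a b : σ →₀ ℕ) : (a - b + b) - a = b - a := by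
  ext x; simp only [Finsupp.add_apply, Finsupp.tsub_apply]; omega

/-! ### Basic facts about `phi` and `taylorRel` -/

lemma phi_apply (m : ℕ) (d : Fin (m+1) → (σ →₀ ℕ)) (v : Fin (m+1) → MvPolynomial σ K) :
    phi K m d v = ∑ i, v i * monomial (d i) 1 := rfl

lemma taylorRel_apply_right (m : ℕ) (d : Fin (m+1) → (σ →₀ ℕ)) {i j : Fin (m+1)} :
    taylorRel K m d i j j = monomial (d i - d j) 1 := by simp [taylorRel]

lemma taylorRel_apply_left (m : ℕ) (d : Fin (m+1) → (σ →₀ ℕ)) {i j : Fin (m+1)}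
    (h : i ≠ j) : taylorRel K m d i j i = -monomial (d j - d i) 1 := by
  simp [taylorRel, h]

lemma taylorRel_apply_other (m : ℕ) (d : Fin (m+1) → (σ →₀ ℕ)) {i j k : Fin (m+1)}
    (hj : k ≠ j) (hi : k ≠ i) : taylorRel K m d i j k = 0 := by
  simp [taylorRel, hj, hi]

lemma phi_taylorRel (m : ℕ) (d : Fin (m+1) → (σ →₀ ℕ)) {i j : Fin (m+1)} (h : i ≠ j) :
    phi K m d (taylorRel K m d i j) = 0 := by
  have hexp : d i - d j + d j = d j - d i + d i := supE_comm _ _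
  rw [phi_apply]
  have hterm : ∀ k : Fin (m+1), taylorRel K m d i j k * monomial (d k) (1:K)
      = (if k = j then monomial (d i - d j + d j) (1:K) else 0)
        + (if k = i then -monomial (d j - d i + d i) (1:K) else 0) := by
    intro k
    by_cases hj : k = j
    · subst hj
      rw [taylorRel_apply_right, if_pos rfl, if_neg (Ne.symm h),
        monomial_mul, mul_one, add_zero]
    · by_cases hi : k = i
      · subst hi
        rw [taylorRel_apply_left _ _ h, if_neg hj, if_pos rfl, neg_mul,
          monomial_mul, mul_one, zero_add]
      · rw [taylorRel_apply_other _ _ hj hi, if_neg hj, if_neg hi, zero_mul, add_zero]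
  rw [Finset.sum_congr rfl (fun k _ => hterm k), Finset.sum_add_distrib,
    Finset.sum_ite_eq' Finset.univ j (fun _ => monomial (d i - d j + d j) (1:K)),
    Finset.sum_ite_eq' Finset.univ i (fun _ => -monomial (d j - d i + d i) (1:K))]
  simp [hexp]

lemma taylorRel_mem_ker (m : ℕ) (d : Fin (m+1) → (σ →₀ ℕ)) {i j : Fin (m+1)} (h : i ≠ j) :
    taylorRel K m d i j ∈ LinearMap.ker (phi K m d) :=
  LinearMap.mem_ker.mpr (phi_taylorRel m d h)

/-! ### The representation lemma : a linear Taylor relation is a constant-coefficient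
combination of the rows of any Hilbert–Burch matrix, supported on rows of the same
multidegree. -/

lemma repr_linear {m : ℕ} {d : Fin (m+1) → (σ →₀ ℕ)} {t : Fin m → Fin (m+1) × Fin (m+1)}
    (ht : IsHB K m d t) {c0 : ℕ} (hc : ∀ i, mdeg (d i) = c0)
    (hν : ∀ k, mdeg (d (t k).1 - d (t k).2) = 1 ∧ mdeg (d (t k).2 - d (t k).1) = 1)
    {a b : Fin (m+1)} (hab : a ≠ b) (h1 : mdeg (d a - d b) = 1) :
    ∃ cf : Fin m → K,
      (∀ l, cf l ≠ 0 → d (t l).1 - d (t l).2 + d (t l).2 = d a - d b + d b) ∧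
      taylorRel K m d a b = ∑ l, (C (cf l) : MvPolynomial σ K) • taylorRel K m d (t l).1 (t l).2 := by
  classical
  set μ : σ →₀ ℕ := d a - d b + d b with hμdef
  have hmem : taylorRel K m d a b ∈ LinearMap.ker (phi K m d) := taylorRel_mem_ker m d hab
  rw [← ht.2] at hmem
  obtain ⟨f, hf⟩ := (Submodule.mem_span_range_iff_exists_fun _).mp hmem
  set P : (Fin (m+1) → MvPolynomial σ K) → (Fin (m+1) → MvPolynomial σ K) :=
    fun v j => if d j ≤ μ then monomial (μ - d j) (coeff (μ - d j) (v j)) else 0 with hP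
  -- `P` fixes the linear Taylor relation of `(a,b)`
  have hP1 : P (taylorRel K m d a b) = taylorRel K m d a b := by
    funext j
    by_cases hjb : j = b
    · rw [hjb]
      simp only [hP]
      rw [if_pos (le_supE_right (d a) (d b)), taylorRel_apply_right, supE_sub_right]
      simp [coeff_monomial]
    · by_cases hja : j = a
      · rw [hja]
        simp only [hP]
        rw [if_pos (le_supE_left (d a) (d b)), taylorRel_apply_left _ _ hab, supE_sub_left]
        simp [coeff_neg, coeff_monomial]
      · simp only [hP]
        rw [taylorRel_apply_other _ _ hjb hja]
        simp
  -- `P` is additive on the finite sum we care about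
  have hPsum : P (∑ l, f l • taylorRel K m d (t l).1 (t l).2)
      = ∑ l, P (f l • taylorRel K m d (t l).1 (t l).2) := by
    funext j
    by_cases hj : d j ≤ μ
    · simp only [hP, if_pos hj, Finset.sum_apply]
      rw [MvPolynomial.coeff_sum, map_sum]
    · simp only [hP, if_neg hj, Finset.sum_apply, Finset.sum_const_zero]
  -- the individual terms
  have hterm : ∀ l : Fin m,
      P (f l • taylorRel K m d (t l).1 (t l).2)
        = (C (if d (t l).1 - d (t l).2 + d (t l).2 = μ then coeff 0 (f l) else 0)
            : MvPolynomial σ K) • taylorRel K m d (t l).1 (t l).2 := by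
    intro l
    set p := (t l).1 with hpdef
    set q := (t l).2 with hqdef
    have hpq : p ≠ q := ht.1 l
    by_cases hle : d p - d q + d q ≤ μ
    · have hνμ : d p - d q + d q = μ := by
        refine eq_of_le_of_mdeg_le hle ?_
        have e1 : mdeg (d p - d q + d q) = 1 + c0 := by rw [mdeg_add, (hν l).1, hc]
        have e2 : mdeg μ = 1 + c0 := by rw [hμdef, mdeg_add, h1, hc]
        omega
      rw [if_pos hνμ]
      funext j
      by_cases hjq : j = q
      · rw [hjq]
        simp only [hP, Pi.smul_apply, smul_eq_mul]
        have hqμ : d q ≤ μ := hνμ ▸ le_supE_right (d p) (d q)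
        have hexp : μ - d q = d p - d q := by rw [← hνμ]; exact supE_sub_right _ _
        rw [if_pos hqμ, taylorRel_apply_right, coeff_mul_monomial', hexp, if_pos le_rfl,
          tsub_self, mul_one, C_mul_monomial, mul_one]
      · by_cases hjp : j = p
        · rw [hjp]
          simp only [hP, Pi.smul_apply, smul_eq_mul]
          have hpμ : d p ≤ μ := hνμ ▸ le_supE_left (d p) (d q)
          have hexp : μ - d p = d q - d p := by rw [← hνμ]; exact supE_sub_left _ _
          rw [if_pos hpμ, taylorRel_apply_left _ _ hpq, mul_neg, coeff_neg,
            coeff_mul_monomial', hexp, if_pos le_rfl, tsub_self, mul_one,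
            mul_neg, C_mul_monomial, mul_one, map_neg]
        · simp only [hP, Pi.smul_apply, smul_eq_mul]
          rw [taylorRel_apply_other _ _ hjq hjp]
          simp
    · rw [if_neg (fun hh => hle (le_of_eq hh)), map_zero, zero_smul]
      funext j
      simp only [hP, Pi.smul_apply, smul_eq_mul, Pi.zero_apply]
      by_cases hj : d j ≤ μ
      · by_cases hjq : j = q
        · rw [hjq] at hj ⊢
          rw [if_pos hj, taylorRel_apply_right, coeff_mul_monomial', if_neg, monomial_zero]
          intro hcon
          apply hle
          calc d p - d q + d q ≤ (μ - d q) + d q := add_le_add_left hcon _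
          _ = μ := tsub_add_cancel_of_le hj
        · by_cases hjp : j = p
          · rw [hjp] at hj ⊢
            rw [if_pos hj, taylorRel_apply_left _ _ hpq, mul_neg, coeff_neg,
              coeff_mul_monomial', if_neg, neg_zero, monomial_zero]
            intro hcon
            apply hle
            rw [supE_comm]
            calc d q - d p + d p ≤ (μ - d p) + d p := add_le_add_left hcon _
            _ = μ := tsub_add_cancel_of_le hj
          · rw [if_pos hj, taylorRel_apply_other _ _ hjq hjp, mul_zero, coeff_zero,
              monomial_zero]
      · rw [if_neg hj]
  refine ⟨fun l => if d (t l).1 - d (t l).2 + d (t l).2 = μ then coeff 0 (f l) else 0,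
    fun l hl => ?_, ?_⟩
  · by_contra hcon
    exact hl (by simp only [if_neg hcon])
  · calc taylorRel K m d a b = P (taylorRel K m d a b) := hP1.symm
    _ = P (∑ l, f l • taylorRel K m d (t l).1 (t l).2) := by rw [hf]
    _ = ∑ l, P (f l • taylorRel K m d (t l).1 (t l).2) := hPsum
    _ = _ := Finset.sum_congr rfl (fun l _ => hterm l)

/-! ### Swapping a linear Taylor relation into a Hilbert–Burch matrix -/

lemma adj_of_mdeg_one {m : ℕ} {d : Fin (m+1) → (σ →₀ ℕ)} {t : Fin m → Fin (m+1) × Fin (m+1)}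
    (ht : IsHB K m d t) (hlin : HasLinearRes K m d)
    {a b : Fin (m+1)} (hab : a ≠ b) (h1 : mdeg (d a - d b) = 1) :
    (taylorGraph K m d).Adj a b := by
  classical
  obtain ⟨c0, hc⟩ := hlin.1
  obtain ⟨cf, hsupp, hrep⟩ := repr_linear ht hc (hlin.2 t ht) hab h1
  have hne : taylorRel K m d a b ≠ 0 := by
    intro h0
    have h0b := congrFun h0 b
    rw [taylorRel_apply_right] at h0b
    simp only [Pi.zero_apply] at h0b
    exact one_ne_zero ((MvPolynomial.monomial_eq_zero).mp h0b)
  obtain ⟨l0, hl0⟩ : ∃ l0, cf l0 ≠ 0 := by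
    by_contra hcon
    push_neg at hcon
    apply hne
    rw [hrep]
    exact Finset.sum_eq_zero fun l _ => by rw [hcon l, map_zero, zero_smul]
  set t' : Fin m → Fin (m+1) × Fin (m+1) := Function.update t l0 (a, b) with ht'def
  have ht'1 : ∀ k, (t' k).1 ≠ (t' k).2 := by
    intro k
    by_cases hk : k = l0
    · subst hk; rw [ht'def, Function.update_self]; exact hab
    · rw [ht'def, Function.update_of_ne hk]; exact ht.1 k
  have hspan : Submodule.span (MvPolynomial σ K)
      (Set.range fun k => taylorRel K m d (t' k).1 (t' k).2)
        = LinearMap.ker (phi K m d) := by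
    apply le_antisymm
    · rw [Submodule.span_le]
      rintro x ⟨k, rfl⟩
      exact taylorRel_mem_ker m d (ht'1 k)
    · rw [← ht.2, Submodule.span_le]
      rintro x ⟨k, rfl⟩
      rcases eq_or_ne k l0 with hk | hk
      · rw [hk]
        show taylorRel K m d (t l0).1 (t l0).2 ∈ _
        have hsum := hrep
        rw [← Finset.add_sum_erase _ _ (Finset.mem_univ l0)] at hsum
        have hrl0 : taylorRel K m d (t l0).1 (t l0).2
            = (C (cf l0)⁻¹ : MvPolynomial σ K) •
              (taylorRel K m d a b - ∑ l ∈ Finset.univ.erase l0,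
                (C (cf l) : MvPolynomial σ K) • taylorRel K m d (t l).1 (t l).2) := by
          rw [hsum, add_sub_cancel_right, smul_smul, ← C_mul, inv_mul_cancel₀ hl0, C_1,
            one_smul]
        rw [hrl0]
        refine Submodule.smul_mem _ _ (Submodule.sub_mem _ ?_ (Submodule.sum_mem _ ?_))
        · refine Submodule.subset_span ⟨l0, ?_⟩
          show taylorRel K m d (t' l0).1 (t' l0).2 = taylorRel K m d a b
          simp only [ht'def, Function.update_self]
        · intro l hl
          have hlne : l ≠ l0 := Finset.ne_of_mem_erase hl
          refine Submodule.smul_mem _ _ (Submodule.subset_span ⟨l, ?_⟩)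
          show taylorRel K m d (t' l).1 (t' l).2 = _
          simp only [ht'def, Function.update_of_ne hlne]
      · refine Submodule.subset_span ⟨k, ?_⟩
        show taylorRel K m d (t' k).1 (t' k).2 = _
        simp only [ht'def, Function.update_of_ne hk]
  have hadj : (relGraph t').Adj a b := by
    rw [relGraph, SimpleGraph.fromRel_adj]
    exact ⟨hab, Or.inl ⟨l0, by rw [ht'def, Function.update_self]⟩⟩
  rw [taylorGraph, SimpleGraph.sSup_adj]
  exact ⟨relGraph t', ⟨t', ⟨ht'1, hspan⟩, rfl⟩, hadj⟩

/-- Adjacency in the Taylor graph forces the two Taylor complements to be linear. -/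
lemma adj_imp {m : ℕ} {d : Fin (m+1) → (σ →₀ ℕ)} (hlin : HasLinearRes K m d)
    {a b : Fin (m+1)} (h : (taylorGraph K m d).Adj a b) :
    a ≠ b ∧ mdeg (d a - d b) = 1 ∧ mdeg (d b - d a) = 1 ∧ ∃ t, IsHB K m d t := by
  rw [taylorGraph, SimpleGraph.sSup_adj] at h
  obtain ⟨Γ, hΓ, hadj⟩ := h
  obtain ⟨t, ht, rfl⟩ := hΓ
  rw [relGraph, SimpleGraph.fromRel_adj] at hadj
  obtain ⟨hne, hk⟩ := hadj
  rcases hk with ⟨k, hk⟩ | ⟨k, hk⟩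
  · have h2 := hlin.2 t ht k
    rw [hk] at h2
    exact ⟨hne, h2.1, h2.2, t, ht⟩
  · have h2 := hlin.2 t ht k
    rw [hk] at h2
    exact ⟨hne, h2.2, h2.1, t, ht⟩

/-- Any function constant on the rows of a Hilbert–Burch matrix is constant. -/
lemma const_of_rows {m : ℕ} {d : Fin (m+1) → (σ →₀ ℕ)} {t : Fin m → Fin (m+1) × Fin (m+1)}
    (ht : IsHB K m d t) (χ : Fin (m+1) → K) (hχ : ∀ l, χ (t l).1 = χ (t l).2)
    (a b : Fin (m+1)) : χ a = χ b := by
  classical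
  by_cases hab : a = b
  · rw [hab]
  set D : (Fin (m+1) → MvPolynomial σ K) →ₗ[MvPolynomial σ K]
      (Fin (m+1) → MvPolynomial σ K) :=
    { toFun := fun v j => C (χ j) * v j
      map_add' := by intro x y; funext j; simp [mul_add]
      map_smul' := by
        intro c x; funext j
        simp only [Pi.smul_apply, smul_eq_mul, RingHom.id_apply]
        ring } with hD
  set ψ := (phi K m d).comp D with hψ
  have hψtr : ∀ p q : Fin (m+1), p ≠ q →
      ψ (taylorRel K m d p q)
        = (C (χ q) - C (χ p)) * monomial (d p - d q + d q) 1 := by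
    intro p q hpq
    have hexp : d q - d p + d p = d p - d q + d q := supE_comm _ _
    rw [hψ, LinearMap.comp_apply, phi_apply]
    have hterm : ∀ k : Fin (m+1), D (taylorRel K m d p q) k * monomial (d k) (1:K)
        = (if k = q then C (χ q) * monomial (d p - d q + d q) (1:K) else 0)
          + (if k = p then -(C (χ p) * monomial (d q - d p + d p) (1:K)) else 0) := by
      intro k
      simp only [hD, LinearMap.coe_mk, AddHom.coe_mk]
      by_cases hkq : k = q
      · rw [hkq, if_pos rfl, if_neg (Ne.symm hpq), taylorRel_apply_right, add_zero,
          mul_assoc, monomial_mul, mul_one]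
      · by_cases hkp : k = p
        · rw [hkp, if_neg hpq, if_pos rfl, taylorRel_apply_left _ _ hpq, zero_add,
            mul_neg, neg_mul, mul_assoc, monomial_mul, mul_one]
        · rw [taylorRel_apply_other _ _ hkq hkp, if_neg hkq, if_neg hkp, mul_zero,
            zero_mul, add_zero]
    rw [Finset.sum_congr rfl (fun k _ => hterm k), Finset.sum_add_distrib,
      Finset.sum_ite_eq' Finset.univ q, Finset.sum_ite_eq' Finset.univ p]
    simp only [Finset.mem_univ, if_pos]
    rw [hexp, sub_mul]
    ring
  have hle : Submodule.span (MvPolynomial σ K)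
      (Set.range fun k => taylorRel K m d (t k).1 (t k).2) ≤ LinearMap.ker ψ := by
    rw [Submodule.span_le]
    rintro x ⟨k, rfl⟩
    rw [SetLike.mem_coe, LinearMap.mem_ker, hψtr _ _ (ht.1 k), hχ k, sub_self, zero_mul]
  have h0 : ψ (taylorRel K m d a b) = 0 := by
    have hmem : taylorRel K m d a b ∈ LinearMap.ker (phi K m d) :=
      taylorRel_mem_ker m d hab
    rw [← ht.2] at hmem
    exact LinearMap.mem_ker.mp (hle hmem)
  rw [hψtr a b hab] at h0
  rcases mul_eq_zero.mp h0 with hz | hz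
  · have := sub_eq_zero.mp hz
    exact (C_injective σ K this).symm
  · exact absurd ((MvPolynomial.monomial_eq_zero).mp hz) one_ne_zero

/-! ### Linear algebra over `K` -/

/-- The difference vector attached to a row of a Hilbert–Burch matrix. -/
def vecK (K : Type*) [Field K] {m : ℕ} (t : Fin m → Fin (m+1) × Fin (m+1)) (l : Fin m) :
    Fin (m+1) → K :=
  Pi.single (t l).2 1 - Pi.single (t l).1 1

/-- Sum of coordinates, as a linear functional. -/
def sumF (K : Type*) [Field K] (N : ℕ) : (Fin N → K) →ₗ[K] K where
  toFun v := ∑ j, v j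
  map_add' x y := by simp [Finset.sum_add_distrib]
  map_smul' c x := by simp [Finset.mul_sum]

lemma sumF_single (N : ℕ) (j : Fin N) (c : K) : sumF K N (Pi.single j c) = c := by
  simp [sumF, Finset.sum_pi_single']

lemma span_vecK {m : ℕ} {d : Fin (m+1) → (σ →₀ ℕ)} {t : Fin m → Fin (m+1) × Fin (m+1)}
    (ht : IsHB K m d t) :
    Submodule.span K (Set.range (vecK K t)) = LinearMap.ker (sumF K (m+1)) := by
  classical
  apply le_antisymm
  · rw [Submodule.span_le]
    rintro x ⟨l, rfl⟩
    rw [SetLike.mem_coe, LinearMap.mem_ker, vecK, map_sub, sumF_single, sumF_single,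
      sub_self]
  · intro v hv
    by_contra hvW
    set W := Submodule.span K (Set.range (vecK K t)) with hW
    have hq : W.mkQ v ≠ 0 := by
      intro h0
      exact hvW (by rwa [Submodule.mkQ_apply, Submodule.Quotient.mk_eq_zero] at h0)
    obtain ⟨φ0, hφ0⟩ : ∃ φ0 : Module.Dual K ((Fin (m+1) → K) ⧸ W), φ0 (W.mkQ v) ≠ 0 := by
      by_contra hcon
      push_neg at hcon
      exact hq ((Module.forall_dual_apply_eq_zero_iff K _).mp hcon)
    set χ : Fin (m+1) → K := fun j => φ0 (W.mkQ (Pi.single j 1)) with hχdef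
    have hχ : ∀ l, χ (t l).1 = χ (t l).2 := by
      intro l
      have hmem : vecK K t l ∈ W := Submodule.subset_span ⟨l, rfl⟩
      have hz : φ0 (W.mkQ (vecK K t l)) = 0 := by
        rw [Submodule.mkQ_apply, (Submodule.Quotient.mk_eq_zero W).mpr hmem, map_zero]
      rw [vecK, map_sub, map_sub] at hz
      exact (sub_eq_zero.mp hz).symm
    have hconst := const_of_rows (K := K) (σ := σ) ht χ hχ
    apply hφ0
    have hdecomp : v = ∑ j, v j • (Pi.single j 1 : Fin (m+1) → K) := by
      funext x
      rw [Finset.sum_apply]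
      simp [Pi.single_apply, mul_ite, Finset.sum_ite_eq]
    have hsum0 : ∑ j, v j = 0 := hv
    calc φ0 (W.mkQ v)
        = φ0 (W.mkQ (∑ j, v j • (Pi.single j 1 : Fin (m+1) → K))) := by rw [← hdecomp]
    _ = ∑ j, v j • φ0 (W.mkQ (Pi.single j 1 : _)) := by rw [map_sum, map_sum]; simp
    _ = ∑ j, v j • χ 0 := by
        refine Finset.sum_congr rfl fun j _ => ?_
        show v j • χ j = v j • χ 0
        rw [hconst j 0]
    _ = (∑ j, v j) • χ 0 := by rw [Finset.sum_smul]
    _ = 0 := by rw [hsum0, zero_smul]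

lemma finrank_ker_sumF (m : ℕ) :
    Module.finrank K (LinearMap.ker (sumF K (m+1))) = m := by
  have hsurj : Function.Surjective (sumF K (m+1)) := fun c =>
    ⟨Pi.single 0 c, sumF_single (m+1) 0 c⟩
  have honto : LinearMap.range (sumF K (m+1)) = ⊤ := LinearMap.range_eq_top.mpr hsurj
  have h := LinearMap.finrank_range_add_finrank_ker (sumF K (m+1))
  rw [honto, finrank_top, Module.finrank_self,
    Module.finrank_fintype_fun_eq_card, Fintype.card_fin] at h
  omega

lemma vecK_indep {m : ℕ} {d : Fin (m+1) → (σ →₀ ℕ)} {t : Fin m → Fin (m+1) × Fin (m+1)}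
    (ht : IsHB K m d t) {g : Fin m → K}
    (hg : ∑ l, g l • vecK K t l = 0) : ∀ l, g l = 0 := by
  classical
  set L : (Fin m → K) →ₗ[K] (Fin (m+1) → K) :=
    { toFun := fun g => ∑ l, g l • vecK K t l
      map_add' := by intro x y; simp [add_smul, Finset.sum_add_distrib]
      map_smul' := by intro c x; simp [mul_smul, Finset.smul_sum] } with hL
  have hrange : LinearMap.range L = LinearMap.ker (sumF K (m+1)) := by
    rw [← span_vecK (σ := σ) ht]
    apply le_antisymm
    · rintro x ⟨g', rfl⟩
      show (∑ l, g' l • vecK K t l) ∈ Submodule.span K (Set.range (vecK K t))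
      exact Submodule.sum_mem _ fun l _ =>
        Submodule.smul_mem _ _ (Submodule.subset_span (Set.mem_range_self l))
    · intro x hx
      exact (Submodule.mem_span_range_iff_exists_fun K).mp hx
  have hkerL : LinearMap.ker L = ⊥ := by
    have h1 := LinearMap.finrank_range_add_finrank_ker L
    rw [hrange, finrank_ker_sumF, Module.finrank_fintype_fun_eq_card,
      Fintype.card_fin] at h1
    have h2 : Module.finrank K (LinearMap.ker L) = 0 := by omega
    exact Submodule.finrank_eq_zero.mp h2
  have hgk : g ∈ LinearMap.ker L := by
    rw [LinearMap.mem_ker]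
    exact hg
  rw [hkerL, Submodule.mem_bot] at hgk
  intro l
  rw [hgk]
  rfl

/-! ### Walk auxiliary lemmas -/

section WalkAux

variable {V : Type*} {G : SimpleGraph V}

lemma support_eq_map_getVert {u v : V} (p : G.Walk u v) :
    p.support = (List.range (p.length + 1)).map p.getVert := by
  induction p with
  | nil => rfl
  | cons h q ih =>
    rw [SimpleGraph.Walk.support_cons, ih, SimpleGraph.Walk.length_cons]
    conv_rhs => rw [List.range_succ_eq_map, List.map_cons, List.map_map]
    rfl

lemma cycle_getVert_inj {u : V} {p : G.Walk u u} (hp : p.IsCycle) :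
    ∀ {i j : ℕ}, i < p.length → j < p.length → p.getVert i = p.getVert j → i = j := by
  have hnd : p.support.tail.Nodup := hp.support_nodup
  have htail : p.support.tail = (List.range p.length).map (fun i => p.getVert (i+1)) := by
    rw [support_eq_map_getVert, List.range_succ_eq_map, List.map_cons, List.tail_cons,
      List.map_map]
    rfl
  rw [htail] at hnd
  have hinj : ∀ x ∈ List.range p.length, ∀ y ∈ List.range p.length,
      p.getVert (x+1) = p.getVert (y+1) → x = y := List.inj_on_of_nodup_map hnd
  have hlen : 3 ≤ p.length := hp.three_le_length
  intro i j hi hj hij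
  rcases Nat.eq_zero_or_pos i with hi0 | hipos
  · rcases Nat.eq_zero_or_pos j with hj0 | hjpos
    · omega
    · exfalso
      subst hi0
      have h1 : p.getVert j = p.getVert ((p.length - 1) + 1) := by
        rw [show p.length - 1 + 1 = p.length by omega, SimpleGraph.Walk.getVert_length,
          ← hij, SimpleGraph.Walk.getVert_zero]
      have := hinj (j-1) (List.mem_range.mpr (by omega)) (p.length - 1)
        (List.mem_range.mpr (by omega)) (by rw [show j - 1 + 1 = j by omega]; exact h1)
      omega
  · rcases Nat.eq_zero_or_pos j with hj0 | hjpos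
    · exfalso
      subst hj0
      have h1 : p.getVert i = p.getVert ((p.length - 1) + 1) := by
        rw [show p.length - 1 + 1 = p.length by omega, SimpleGraph.Walk.getVert_length,
          hij, SimpleGraph.Walk.getVert_zero]
      have := hinj (i-1) (List.mem_range.mpr (by omega)) (p.length - 1)
        (List.mem_range.mpr (by omega)) (by rw [show i - 1 + 1 = i by omega]; exact h1)
      omega
    · have := hinj (i-1) (List.mem_range.mpr (by omega)) (j-1)
        (List.mem_range.mpr (by omega))
        (by rw [show i - 1 + 1 = i by omega, show j - 1 + 1 = j by omega]; exact hij)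
      omega

lemma edge_mem_walk_getVert {u v x y : V} (p : G.Walk u v) (he : s(x, y) ∈ p.edges) :
    ∃ i, i < p.length ∧ ((p.getVert i = x ∧ p.getVert (i+1) = y) ∨
      (p.getVert i = y ∧ p.getVert (i+1) = x)) := by
  induction p with
  | nil => simp at he
  | @cons a b c h q ih =>
    rw [SimpleGraph.Walk.edges_cons, List.mem_cons] at he
    rcases he with he | he
    · refine ⟨0, by simp, ?_⟩
      have h2 := Sym2.eq_iff.mp he
      have hg0 : (q.cons h).getVert 0 = a := SimpleGraph.Walk.getVert_zero _
      have hg1 : (q.cons h).getVert 1 = b := by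
        rw [SimpleGraph.Walk.getVert_cons_succ, SimpleGraph.Walk.getVert_zero]
      rcases h2 with ⟨hxa, hyb⟩ | ⟨hxb, hya⟩
      · exact Or.inl ⟨by rw [hg0, hxa], by rw [hg1, hyb]⟩
      · exact Or.inr ⟨by rw [hg0, hya], by rw [hg1, hxb]⟩
    · obtain ⟨i, hi, hcase⟩ := ih he
      refine ⟨i+1, by simpa using Nat.succ_lt_succ hi, ?_⟩
      simpa [SimpleGraph.Walk.getVert_cons_succ] using hcase

end WalkAux

/-! ### Evaluation at the all-ones point -/

lemma eval_one_taylorRel {m : ℕ} (d : Fin (m+1) → (σ →₀ ℕ)) {a b : Fin (m+1)} (hab : a ≠ b)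
    (j : Fin (m+1)) :
    eval (fun _ => (1:K)) (taylorRel K m d a b j)
      = (Pi.single b 1 - Pi.single a 1 : Fin (m+1) → K) j := by
  rw [Pi.sub_apply]
  by_cases hjb : j = b
  · rw [hjb, taylorRel_apply_right, Pi.single_eq_same, Pi.single_eq_of_ne (Ne.symm hab),
      eval_monomial]
    simp [Finsupp.prod]
  · by_cases hja : j = a
    · rw [hja, taylorRel_apply_left _ _ hab, Pi.single_eq_same, Pi.single_eq_of_ne hab,
        map_neg, eval_monomial]
      simp [Finsupp.prod]
    · rw [taylorRel_apply_other _ _ hjb hja, Pi.single_eq_of_ne hjb,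
        Pi.single_eq_of_ne hja, map_zero, sub_self]

/-! ### The main lemma: the support of a cycle in the Taylor graph is a clique -/

lemma cycle_clique {m : ℕ} {d : Fin (m+1) → (σ →₀ ℕ)}
    (hdinj : Function.Injective d) (hlin : HasLinearRes K m d)
    {v : Fin (m+1)} (w : (taylorGraph K m d).Walk v v) (hw : w.IsCycle) :
    ∀ a ∈ w.support, ∀ b ∈ w.support, a ≠ b → (taylorGraph K m d).Adj a b := by
  classical
  obtain ⟨c0, hc⟩ := hlin.1
  have hs3 : 3 ≤ w.length := hw.three_le_length
  set s := w.length with hs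
  set vv : ℕ → Fin (m+1) := w.getVert with hvv
  have hadjstep : ∀ i, i < s → (taylorGraph K m d).Adj (vv i) (vv (i+1)) :=
    fun i hi => w.adj_getVert_succ hi
  have hinj : ∀ {i j}, i < s → j < s → vv i = vv j → i = j :=
    fun hi hj hij => cycle_getVert_inj hw hi hj hij
  have hvs : vv s = vv 0 := by
    rw [hvv, hs, SimpleGraph.Walk.getVert_length, SimpleGraph.Walk.getVert_zero]
  obtain ⟨hne0, h10, h20, t, ht⟩ := adj_imp hlin (hadjstep 0 (by omega))
  have hν := hlin.2 t ht
  set μ : ℕ → (σ →₀ ℕ) := fun i => d (vv i) - d (vv (i+1)) + d (vv (i+1)) with hμ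
  -- a `K`-linear representation for every step
  have H : ∀ i : ℕ, ∃ cf : Fin m → K, i < s →
      (∀ l, cf l ≠ 0 → d (t l).1 - d (t l).2 + d (t l).2 = μ i) ∧
      ((Pi.single (vv (i+1)) 1 - Pi.single (vv i) 1 : Fin (m+1) → K)
        = ∑ l, cf l • vecK K t l) := by
    intro i
    by_cases hi : i < s
    · obtain ⟨hnei, h1i, h2i, -⟩ := adj_imp hlin (hadjstep i hi)
      obtain ⟨cf, hsupp, hrep⟩ := repr_linear ht hc hν hnei h1i
      refine ⟨cf, fun _ => ⟨hsupp, ?_⟩⟩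
      funext j
      calc (Pi.single (vv (i+1)) 1 - Pi.single (vv i) 1 : Fin (m+1) → K) j
          = eval (fun _ => (1:K)) (taylorRel K m d (vv i) (vv (i+1)) j) :=
            (eval_one_taylorRel d hnei j).symm
      _ = eval (fun _ => (1:K))
            ((∑ l, (C (cf l) : MvPolynomial σ K) • taylorRel K m d (t l).1 (t l).2) j) := by
            rw [hrep]
      _ = ∑ l, cf l * eval (fun _ => (1:K)) (taylorRel K m d (t l).1 (t l).2 j) := by
            rw [Finset.sum_apply, map_sum]
            exact Finset.sum_congr rfl fun l _ => by
              rw [Pi.smul_apply, smul_eq_mul, map_mul, eval_C]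
      _ = (∑ l, cf l • vecK K t l) j := by
            rw [Finset.sum_apply]
            exact Finset.sum_congr rfl fun l _ => by
              rw [eval_one_taylorRel d (ht.1 l), Pi.smul_apply, smul_eq_mul]
              rfl
    · exact ⟨0, fun hcon => absurd hcon hi⟩
  choose cf hcf using H
  -- the coefficients sum to zero
  have hgl : ∀ l, ∑ i ∈ Finset.range s, cf i l = 0 := by
    have hzero : ∑ l, (∑ i ∈ Finset.range s, cf i l) • vecK K t l = 0 := by
      calc ∑ l, (∑ i ∈ Finset.range s, cf i l) • vecK K t l
          = ∑ l, ∑ i ∈ Finset.range s, cf i l • vecK K t l := by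
            exact Finset.sum_congr rfl fun l _ => Finset.sum_smul
      _ = ∑ i ∈ Finset.range s, ∑ l, cf i l • vecK K t l := Finset.sum_comm
      _ = ∑ i ∈ Finset.range s,
            ((Pi.single (vv (i+1)) 1 - Pi.single (vv i) 1 : Fin (m+1) → K)) := by
            exact Finset.sum_congr rfl fun i hi =>
              ((hcf i (Finset.mem_range.mp hi)).2).symm
      _ = Pi.single (vv s) 1 - Pi.single (vv 0) 1 :=
            Finset.sum_range_sub (fun i => (Pi.single (vv i) 1 : Fin (m+1) → K)) s
      _ = 0 := by rw [hvs, sub_self]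
    exact vecK_indep (σ := σ) ht hzero
  -- all the steps have the same multidegree
  have hμall : ∀ i, i < s → μ i = μ 0 := by
    intro i
    induction i with
    | zero => intro _; rfl
    | succ j ihj =>
      intro hj1
      have hj : j < s := by omega
      have hμj := ihj hj
      set F : Finset ℕ := (Finset.range s).filter (fun i => μ i = μ 0) with hF
      have hzz : ∑ i ∈ F, ((Pi.single (vv (i+1)) 1 - Pi.single (vv i) 1 : Fin (m+1) → K))
          = 0 := by
        have hrw : ∀ i ∈ F, (Pi.single (vv (i+1)) 1 - Pi.single (vv i) 1 : Fin (m+1) → K)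
            = ∑ l, cf i l • vecK K t l := fun i hiF =>
          (hcf i (Finset.mem_range.mp (Finset.mem_filter.mp hiF).1)).2
        rw [Finset.sum_congr rfl hrw, Finset.sum_comm]
        refine Finset.sum_eq_zero fun l _ => ?_
        rw [← Finset.sum_smul]
        by_cases hl : d (t l).1 - d (t l).2 + d (t l).2 = μ 0
        · have hfull : ∑ i ∈ F, cf i l = ∑ i ∈ Finset.range s, cf i l := by
            rw [hF]
            apply Finset.sum_filter_of_ne
            intro i hi hcfl
            have hvl := (hcf i (Finset.mem_range.mp hi)).1 l hcfl
            rw [← hvl, hl]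
          rw [hfull, hgl l, zero_smul]
        · have hall0 : ∀ i ∈ F, cf i l = 0 := by
            intro i hiF
            by_contra hcfl
            obtain ⟨his, hiμ⟩ := Finset.mem_filter.mp hiF
            have hvl := (hcf i (Finset.mem_range.mp his)).1 l hcfl
            exact hl (hvl.trans hiμ)
          rw [Finset.sum_congr rfl hall0, Finset.sum_const_zero, zero_smul]
      have hev := congrFun hzz (vv (j+1))
      rw [Finset.sum_apply] at hev
      have hterm : ∀ i ∈ F,
          ((Pi.single (vv (i+1)) 1 - Pi.single (vv i) 1 : Fin (m+1) → K)) (vv (j+1))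
            = (if i = j then (1:K) else 0) - (if i = j+1 then 1 else 0) := by
        intro i hiF
        have his : i < s := Finset.mem_range.mp (Finset.mem_filter.mp hiF).1
        rw [Pi.sub_apply]
        congr 1
        · rw [Pi.single_apply]
          by_cases hij : i = j
          · rw [if_pos (by rw [hij]), if_pos hij]
          · rw [if_neg ?_, if_neg hij]
            intro heq
            rcases Nat.lt_or_ge (i+1) s with hi1 | hi1
            · have := hinj (show j+1 < s by omega) hi1 heq
              omega
            · have hi1' : i + 1 = s := by omega
              rw [hi1', hvs] at heq
              have := hinj (show j+1 < s by omega) (show 0 < s by omega) heq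
              omega
        · rw [Pi.single_apply]
          by_cases hij : i = j+1
          · rw [if_pos (by rw [hij]), if_pos hij]
          · rw [if_neg ?_, if_neg hij]
            intro heq
            exact hij ((hinj (show j+1 < s by omega) his heq).symm)
      rw [Finset.sum_congr rfl hterm, Finset.sum_sub_distrib,
        Finset.sum_ite_eq' F j (fun _ => (1:K)),
        Finset.sum_ite_eq' F (j+1) (fun _ => (1:K))] at hev
      have hjF : j ∈ F := Finset.mem_filter.mpr ⟨Finset.mem_range.mpr hj, hμj⟩
      rw [if_pos hjF] at hev
      by_cases hj1F : j+1 ∈ F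
      · exact (Finset.mem_filter.mp hj1F).2
      · rw [if_neg hj1F] at hev
        norm_num at hev
  -- every support vertex divides μ 0
  have hd0 : ∀ x ∈ w.support, d x ≤ μ 0 := by
    intro x hx
    obtain ⟨i, hgv, hile⟩ := SimpleGraph.Walk.mem_support_iff_exists_getVert.mp hx
    rcases eq_or_lt_of_le hile with heq | hlt
    · have hx0 : x = vv 0 := by rw [← hgv, ← hvs, heq]
      rw [hx0]
      exact le_supE_left _ _
    · have hx0 : x = vv i := hgv.symm
      rw [hx0]
      have : d (vv i) ≤ μ i := le_supE_left _ _
      rwa [hμall i hlt] at this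
  have hmdegμ0 : mdeg (μ 0) = 1 + c0 := by
    show mdeg (d (vv 0) - d (vv 1) + d (vv 1)) = 1 + c0
    rw [mdeg_add, h10, hc]
  -- conclusion
  intro a ha b hb hab
  have hale := hd0 a ha
  have hble := hd0 b hb
  have h1 : mdeg (d a - d b) = 1 := by
    have hsub : d a - d b ≤ μ 0 - d b := tsub_le_tsub_right hale _
    have hμb : mdeg (μ 0 - d b) = 1 := by
      have h2 : (μ 0 - d b) + d b = μ 0 := tsub_add_cancel_of_le hble
      have h3 : mdeg (μ 0 - d b) + mdeg (d b) = mdeg (μ 0) := by rw [← mdeg_add, h2]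
      rw [hc, hmdegμ0] at h3
      omega
    have hle1 : mdeg (d a - d b) ≤ 1 := hμb ▸ mdeg_mono hsub
    have hne0' : mdeg (d a - d b) ≠ 0 := by
      intro h0
      have hz : d a - d b = 0 := mdeg_eq_zero h0
      have hle' : d a ≤ d b := tsub_eq_zero_iff_le.mp hz
      have := eq_of_le_of_mdeg_le hle' (by rw [hc, hc])
      exact hab (hdinj this)
    omega
  exact adj_of_mdeg_one ht hlin hab h1

/-- Minimality of the generators forces the exponent vectors to be distinct. -/
lemma minGens_d_injective {m : ℕ} {d : Fin (m+1) → (σ →₀ ℕ)}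
    {I : Ideal (MvPolynomial σ K)} (hgen : MinGens K m d I) :
    Function.Injective d := by
  intro i j hij
  by_contra hne
  apply hgen.2 j
  apply Ideal.subset_span
  refine ⟨i, hne, ?_⟩
  show (monomial (d i) 1 : MvPolynomial σ K) = monomial (d j) 1
  rw [hij]

end

end S14Aux

open S14Aux

open CMCodim2 MvPolynomial
/-- Let `I ⊂ S` be a Cohen–Macaulay monomial ideal of codimension 2
with a linear resolution, and `G(I)` its Taylor graph. If `C` is a cycle in `G(I)`,
then the restriction of `G(I)` to the vertex set of `C` is a complete graph: any two
distinct vertices of `C` are adjacent in `G(I)`. In particular, `G(I)` is chordal. -/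
theorem statement14 (K : Type*) [Field K] {n m : ℕ}
    (d : Fin (m + 1) → (Fin n →₀ ℕ)) (I : Ideal (MvPolynomial (Fin n) K))
    (hgen : MinGens K m d I) (hcm : IsCMCodim2 I) (hlin : HasLinearRes K m d) :
    (∀ (v : Fin (m + 1)) (w : (taylorGraph K m d).Walk v v), w.IsCycle →
        ∀ a ∈ w.support, ∀ b ∈ w.support, a ≠ b → (taylorGraph K m d).Adj a b) ∧
      IsChordal (taylorGraph K m d) := by
  classical
  have hdinj : Function.Injective d := minGens_d_injective hgen
  have key : ∀ (v : Fin (m + 1)) (w : (taylorGraph K m d).Walk v v), w.IsCycle →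
      ∀ a ∈ w.support, ∀ b ∈ w.support, a ≠ b → (taylorGraph K m d).Adj a b :=
    fun v w hw => cycle_clique hdinj hlin w hw
  refine ⟨key, ?_⟩
  intro v w hw hlen
  have hinj : ∀ {i j : ℕ}, i < w.length → j < w.length → w.getVert i = w.getVert j → i = j :=
    fun hi hj hij => cycle_getVert_inj hw hi hj hij
  have hmem0 : w.getVert 0 ∈ w.support :=
    SimpleGraph.Walk.mem_support_iff_exists_getVert.mpr ⟨0, rfl, by omega⟩
  have hmem2 : w.getVert 2 ∈ w.support :=
    SimpleGraph.Walk.mem_support_iff_exists_getVert.mpr ⟨2, rfl, by omega⟩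
  have hne02 : w.getVert 0 ≠ w.getVert 2 := by
    intro h
    have := hinj (show 0 < w.length by omega) (show 2 < w.length by omega) h
    omega
  refine ⟨w.getVert 0, w.getVert 2, hmem0, hmem2,
    key v w hw _ hmem0 _ hmem2 hne02, ?_⟩
  intro hmem
  obtain ⟨i, hi, hcase⟩ := edge_mem_walk_getVert w hmem
  rcases hcase with ⟨hx, hy⟩ | ⟨hx, hy⟩
  · have hi0 : i = 0 := hinj hi (by omega) hx
    rw [hi0] at hy
    have := hinj (show 0+1 < w.length by omega) (show 2 < w.length by omega) hy
    omega
  · have hi2 : i = 2 := hinj hi (by omega) hx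
    rw [hi2] at hy
    rcases Nat.lt_or_ge (2+1) w.length with h3 | h3
    · have := hinj h3 (show 0 < w.length by omega) hy
      omega
    · omega
end
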